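/- arXiv:1209.1419 — 9 statements merged into one kernel-verified Lean document; each statement's English description precedes it below -/
import Mathlib

section
/- For every open quantum random walk on ℤ generated by matrices B, C and with initial density matrix ρ₀, the probability distribution of the walk is given by the dual process through p_x^{(n)} = (1/(2π)) ∫_{-π}^{π} e^{ikx} Tr(ρ₀ Y_n(k)) dk, for all x ∈ ℤ and all n ≥ 0. -/
open MeasureTheory Filter Matrix
open scoped ComplexOrder

/-- The state of the open quantum random walk on `ℤ` generated by `B, C`
with initial density matrix `ρ₀`. -/
noncomputable def oqrwState (B C ρ₀ : Matrix (Fin 2) (Fin 2) ℂ) :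
    ℕ → ℤ → Matrix (Fin 2) (Fin 2) ℂ
  | 0, x => if x = 0 then ρ₀ else 0
  | n + 1, x =>
      B * oqrwState B C ρ₀ n (x + 1) * Bᴴ + C * oqrwState B C ρ₀ n (x - 1) * Cᴴ

/-- The dual process `Y_n(k)` of the OQRW generated by `B, C`:
`Y_0(k) = I`, `Y_{n+1}(k) = e^{ik} B* Y_n(k) B + e^{-ik} C* Y_n(k) C`. -/
noncomputable def oqrwDual (B C : Matrix (Fin 2) (Fin 2) ℂ) :
    ℕ → ℝ → Matrix (Fin 2) (Fin 2) ℂ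
  | 0, _ => 1
  | n + 1, k =>
      Complex.exp (Complex.I * k) • (Bᴴ * oqrwDual B C n k * B) +
        Complex.exp (-(Complex.I * k)) • (Cᴴ * oqrwDual B C n k * C)

lemma oqrwDual_continuous (B C : Matrix (Fin 2) (Fin 2) ℂ) (n : ℕ) :
    Continuous (oqrwDual B C n) := by
  induction n with
  | zero => exact continuous_const
  | succ n ih =>
      show Continuous fun k : ℝ => Complex.exp (Complex.I * (k : ℂ)) • (Bᴴ * oqrwDual B C n k * B) +
        Complex.exp (-(Complex.I * (k : ℂ))) • (Cᴴ * oqrwDual B C n k * C)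
      exact ((Complex.continuous_exp.comp (continuous_const.mul Complex.continuous_ofReal)).smul
          ((continuous_const.matrix_mul ih).matrix_mul continuous_const)).add
        ((Complex.continuous_exp.comp (continuous_const.mul Complex.continuous_ofReal).neg).smul
          ((continuous_const.matrix_mul ih).matrix_mul continuous_const))

lemma oqrwState_succ (B C ρ : Matrix (Fin 2) (Fin 2) ℂ) (n : ℕ) (x : ℤ) :
    oqrwState B C ρ (n + 1) x =
      oqrwState B C (B * ρ * Bᴴ) n (x + 1) + oqrwState B C (C * ρ * Cᴴ) n (x - 1) := by
  induction n generalizing x with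
  | zero =>
      show B * (if x + 1 = 0 then ρ else 0) * Bᴴ + C * (if x - 1 = 0 then ρ else 0) * Cᴴ = _
      show _ = (if x + 1 = 0 then B * ρ * Bᴴ else 0) + (if x - 1 = 0 then C * ρ * Cᴴ else 0)
      split_ifs <;> simp
  | succ n ih =>
      show B * oqrwState B C ρ (n+1) (x + 1) * Bᴴ + C * oqrwState B C ρ (n+1) (x - 1) * Cᴴ = _
      rw [ih (x+1), ih (x-1)]
      show _ = (B * oqrwState B C (B * ρ * Bᴴ) n (x + 1 + 1) * Bᴴ
            + C * oqrwState B C (B * ρ * Bᴴ) n (x + 1 - 1) * Cᴴ)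
          + (B * oqrwState B C (C * ρ * Cᴴ) n (x - 1 + 1) * Bᴴ
            + C * oqrwState B C (C * ρ * Cᴴ) n (x - 1 - 1) * Cᴴ)
      have h1 : x + 1 - 1 = x := by ring
      have h2 : x - 1 + 1 = x := by ring
      rw [h1, h2]
      simp only [Matrix.mul_add, Matrix.add_mul]
      abel

lemma trace_conj_cycle (M ρ Y : Matrix (Fin 2) (Fin 2) ℂ) :
    (ρ * (Mᴴ * Y * M)).trace = (M * ρ * Mᴴ * Y).trace := by
  simp only [← Matrix.mul_assoc]
  rw [Matrix.trace_mul_cycle (ρ * Mᴴ) Y M]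
  simp only [← Matrix.mul_assoc]

lemma integral_exp_int (x : ℤ) :
    (∫ k in (-Real.pi)..Real.pi, Complex.exp (Complex.I * k * x)) =
      if x = 0 then 2 * Real.pi else 0 := by
  rcases eq_or_ne x 0 with hx | hx
  · subst hx
    simp [intervalIntegral.integral_const, two_mul]
  · rw [if_neg hx]
    have hc : (Complex.I * x) ≠ 0 := by
      simp [Complex.I_ne_zero, Complex.ext_iff]
      exact_mod_cast hx
    have : (∫ k in (-Real.pi)..Real.pi, Complex.exp (Complex.I * k * x)) =
        ∫ k in (-Real.pi)..Real.pi, Complex.exp ((Complex.I * x) * k) := by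
      congr 1; ext k; ring_nf
    rw [this, integral_exp_mul_complex hc]
    have h1 : Complex.I * x * Real.pi = ((x : ℤ) : ℂ) * (Real.pi * Complex.I) := by
      push_cast; ring
    have h2 : Complex.I * x * ((-Real.pi : ℝ) : ℂ) = ((-x : ℤ) : ℂ) * (Real.pi * Complex.I) := by
      push_cast; ring
    rw [h1, h2, Complex.exp_int_mul, Complex.exp_int_mul, Complex.exp_pi_mul_I]
    have hne : ((-1 : ℂ)) ^ x ≠ 0 := by
      apply zpow_ne_zero; norm_num
    rw [_root_.zpow_neg]
    have hsq : ((-1 : ℂ)) ^ x * ((-1 : ℂ)) ^ x = 1 := by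
      rw [← zpow_add₀ (by norm_num : (-1:ℂ) ≠ 0)]
      have : x + x = 2 * x := by ring
      rw [this, _root_.zpow_mul]
      norm_num
    rw [inv_eq_of_mul_eq_one_right hsq]
    simp

lemma oqrw_aux (B C : Matrix (Fin 2) (Fin 2) ℂ) (n : ℕ) :
    ∀ (ρ : Matrix (Fin 2) (Fin 2) ℂ) (x : ℤ),
    (oqrwState B C ρ n x).trace =
      (1 / (2 * (Real.pi : ℂ))) *
        ∫ k in (-Real.pi)..Real.pi,
          Complex.exp (Complex.I * k * x) * (ρ * oqrwDual B C n k).trace := by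
  induction n with
  | zero =>
      intro ρ x
      simp only [oqrwState, oqrwDual, Matrix.mul_one]
      rw [intervalIntegral.integral_mul_const, integral_exp_int]
      have hπ : (Real.pi : ℂ) ≠ 0 := Complex.ofReal_ne_zero.mpr Real.pi_ne_zero
      split_ifs with h
      · push_cast
        field_simp
      · simp
  | succ n ih =>
      intro ρ x
      have key : ∀ k : ℝ, Complex.exp (Complex.I * k * x) * (ρ * oqrwDual B C (n+1) k).trace =
          Complex.exp (Complex.I * k * (x + 1 : ℤ)) * ((B * ρ * Bᴴ) * oqrwDual B C n k).trace +
          Complex.exp (Complex.I * k * (x - 1 : ℤ)) * ((C * ρ * Cᴴ) * oqrwDual B C n k).trace := by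
        intro k
        show Complex.exp (Complex.I * k * x) *
          (ρ * (Complex.exp (Complex.I * k) • (Bᴴ * oqrwDual B C n k * B) +
            Complex.exp (-(Complex.I * k)) • (Cᴴ * oqrwDual B C n k * C))).trace = _
        rw [Matrix.mul_add, Matrix.mul_smul, Matrix.mul_smul, Matrix.trace_add,
          Matrix.trace_smul, Matrix.trace_smul, trace_conj_cycle, trace_conj_cycle]
        rw [smul_eq_mul, smul_eq_mul]
        rw [mul_add, ← mul_assoc, ← mul_assoc, ← Complex.exp_add, ← Complex.exp_add]
        have e1 : Complex.I * k * x + Complex.I * k = Complex.I * k * ((x + 1 : ℤ) : ℂ) := by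
          push_cast; ring
        have e2 : Complex.I * k * x + -(Complex.I * k) = Complex.I * k * ((x - 1 : ℤ) : ℂ) := by
          push_cast; ring
        rw [e1, e2]
      rw [intervalIntegral.integral_congr (fun k _ => key k)]
      have i1 : IntervalIntegrable (fun k : ℝ =>
          Complex.exp (Complex.I * k * (x + 1 : ℤ)) * ((B * ρ * Bᴴ) * oqrwDual B C n k).trace)
          volume (-Real.pi) Real.pi := by
        apply Continuous.intervalIntegrable
        exact (Complex.continuous_exp.comp (by fun_prop)).mul
          ((continuous_const.matrix_mul (oqrwDual_continuous B C n)).matrix_trace)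
      have i2 : IntervalIntegrable (fun k : ℝ =>
          Complex.exp (Complex.I * k * (x - 1 : ℤ)) * ((C * ρ * Cᴴ) * oqrwDual B C n k).trace)
          volume (-Real.pi) Real.pi := by
        apply Continuous.intervalIntegrable
        exact (Complex.continuous_exp.comp (by fun_prop)).mul
          ((continuous_const.matrix_mul (oqrwDual_continuous B C n)).matrix_trace)
      rw [intervalIntegral.integral_add i1 i2, mul_add, ← ih (B * ρ * Bᴴ) (x + 1),
        ← ih (C * ρ * Cᴴ) (x - 1), oqrwState_succ, Matrix.trace_add]

/-- The distribution of the OQRW is given by the dual process: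
`p_x^{(n)} = (1/(2π)) ∫_{-π}^{π} e^{ikx} Tr(ρ₀ Y_n(k)) dk`. -/
theorem oqrw_prob_eq_dual (B C ρ₀ : Matrix (Fin 2) (Fin 2) ℂ)
    (hBC : Bᴴ * B + Cᴴ * C = 1) (hpos : ρ₀.PosSemidef) (htr : ρ₀.trace = 1)
    (n : ℕ) (x : ℤ) :
    (oqrwState B C ρ₀ n x).trace =
      (1 / (2 * (Real.pi : ℂ))) *
        ∫ k in (-Real.pi)..Real.pi,
          Complex.exp (Complex.I * k * x) * (ρ₀ * oqrwDual B C n k).trace := by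
  exact oqrw_aux B C n ρ₀ x
end

section
/- Let [a,b] ⊂ ℝ be a finite interval and f : [a,b] → ℝ a continuous function such that |f| attains its maximum at a unique point c ∈ [a,b] (i.e., |f(x)| < |f(c)| for all x ≠ c) with f(c) ≠ 0. Set α_n = ∫_a^b f(x)^n dx. Then there exists n₀ ∈ ℕ such that α_n ≠ 0 for all n ≥ n₀, and for every continuous function g : [a,b] → ℝ one has lim_{n→∞} (1/α_n) ∫_a^b f(x)^n g(x) dx = g(c). -/
open MeasureTheory Filter Set

section aux

variable (a b : ℝ) (f : ℝ → ℝ) (c : ℝ)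

/-- Far from `c`, `|f|` is bounded by some `r < f c`. -/
lemma laplace_far (hf : ContinuousOn f (Set.Icc a b)) (hc : c ∈ Set.Icc a b)
    (hmax : ∀ x ∈ Set.Icc a b, x ≠ c → |f x| < f c) (hfc : 0 < f c)
    (δ : ℝ) (hδ : 0 < δ) :
    ∃ r, 0 ≤ r ∧ r < f c ∧ ∀ x ∈ Set.Icc a b, δ ≤ |x - c| → |f x| ≤ r := by
  set K : Set ℝ := Set.Icc a b ∩ (fun x => |x - c|) ⁻¹' Set.Ici δ with hK
  have hKcl : IsCompact K :=
    isCompact_Icc.inter_right (IsClosed.preimage (by continuity) isClosed_Ici)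
  rcases K.eq_empty_or_nonempty with hKe | hKne
  · refine ⟨0, le_refl 0, hfc, fun x hx hxd => ?_⟩
    have hm : x ∈ K := ⟨hx, hxd⟩
    rw [hKe] at hm
    exact absurd hm (Set.notMem_empty x)
  · obtain ⟨x₀, hx₀K, hx₀⟩ := hKcl.exists_isMaxOn hKne
      ((hf.mono (Set.inter_subset_left)).abs)
    refine ⟨|f x₀|, abs_nonneg _, ?_, fun x hx hxd => hx₀ (Set.mem_inter hx hxd)⟩
    have hx₀c : x₀ ≠ c := by
      intro h
      have := hx₀K.2
      simp [h] at this
      linarith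
    exact hmax x₀ hx₀K.1 hx₀c

/-- Near `c`, `f` is bigger than `f c - ε`. -/
lemma laplace_near (hf : ContinuousOn f (Set.Icc a b)) (hc : c ∈ Set.Icc a b)
    (ε : ℝ) (hε : 0 < ε) :
    ∃ δ > 0, ∀ x ∈ Set.Icc a b, |x - c| ≤ δ → f c - ε < f x := by
  have := Metric.continuousWithinAt_iff.1 (hf c hc) ε hε
  obtain ⟨δ, hδ, h⟩ := this
  refine ⟨δ / 2, by linarith, fun x hx hxd => ?_⟩
  have := h hx (by rw [Real.dist_eq]; linarith)
  rw [Real.dist_eq] at this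
  have := abs_lt.1 this
  linarith [this.1]

end aux

lemma laplace_evP (a b : ℝ) (hab : a < b) (f : ℝ → ℝ) (hf : ContinuousOn f (Set.Icc a b))
    (c : ℝ) (hc : c ∈ Set.Icc a b)
    (hmax : ∀ x ∈ Set.Icc a b, x ≠ c → |f x| < f c) (hfc : 0 < f c)
    (δ : ℝ) (hδ : 0 < δ) (hδpos : ∀ x ∈ Set.Icc a b, |x - c| ≤ δ → 0 ≤ f x) :
    ∃ r, 0 ≤ r ∧ (∀ x ∈ Set.Icc a b, δ ≤ |x - c| → |f x| ≤ r) ∧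
      ∀ K > (0:ℝ), ∀ᶠ n : ℕ in atTop,
        K * (r ^ n * (b - a)) < ∫ x in Set.Ioc a b, f x ^ n := by
  have hba : (0:ℝ) < b - a := by linarith
  obtain ⟨r, hr0, hrM, hrfar⟩ := laplace_far a b f c hf hc hmax hfc δ hδ
  refine ⟨r, hr0, hrfar, ?_⟩
  set ρ := (r + f c) / 2 with hρdef
  have hrρ : r < ρ := by rw [hρdef]; linarith
  have hρM : ρ < f c := by rw [hρdef]; linarith
  have hρ0 : 0 < ρ := lt_of_le_of_lt hr0 hrρ
  obtain ⟨δ₃, hδ₃, hnear⟩ := laplace_near a b f c hf hc (f c - ρ) (by linarith)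
  set δ' := min δ δ₃ with hδ'def
  have hδ' : 0 < δ' := lt_min hδ hδ₃
  set u := max a (c - δ') with hudef
  set v := min b (c + δ') with hvdef
  have hau : a ≤ u := le_max_left _ _
  have hvb : v ≤ b := min_le_left _ _
  have huc : u ≤ c := max_le hc.1 (by linarith)
  have hcv : c ≤ v := le_min hc.2 (by linarith)
  have huv : u < v := by
    rcases eq_or_lt_of_le hc.1 with h | h
    · have : c < v := lt_min (by rw [← h]; exact hab) (by linarith)
      linarith
    · have : u < c := max_lt h (by linarith)
      linarith
  have hL : 0 < v - u := by linarith
  have hcδ' : c - δ' ≤ u := le_max_right _ _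
  have hvδ' : v ≤ c + δ' := min_le_right _ _
  have hIuv : ∀ x ∈ Set.Ioc u v, x ∈ Set.Icc a b ∧ |x - c| ≤ δ' := by
    intro x hx
    refine ⟨⟨le_trans hau hx.1.le, le_trans hx.2 hvb⟩, ?_⟩
    rw [abs_le]
    constructor <;> [linarith [hx.1]; linarith [hx.2]]
  have hfn : ∀ n : ℕ, IntegrableOn (fun x => f x ^ n) (Set.Icc a b) := fun n =>
    (hf.pow n).integrableOn_Icc
  set N := Set.Ioc a b ∩ Set.Icc (c - δ) (c + δ) with hNdef
  set F := Set.Ioc a b \ Set.Icc (c - δ) (c + δ) with hFdef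
  have hNmeas : MeasurableSet N := measurableSet_Ioc.inter measurableSet_Icc
  have hIocIcc : Set.Ioc a b ⊆ Set.Icc a b := Set.Ioc_subset_Icc_self
  have hfnIoc : ∀ n, IntegrableOn (fun x => f x ^ n) (Set.Ioc a b) := fun n =>
    (hfn n).mono_set hIocIcc
  have hsplit : ∀ n : ℕ,
      (∫ x in N, f x ^ n) + ∫ x in F, f x ^ n = ∫ x in Set.Ioc a b, f x ^ n := fun n =>
    integral_inter_add_diff measurableSet_Icc (hfnIoc n)
  have hNIcc : ∀ x ∈ N, x ∈ Set.Icc a b ∧ |x - c| ≤ δ := by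
    intro x hx
    refine ⟨hIocIcc hx.1, ?_⟩
    rw [abs_le]
    exact ⟨by linarith [hx.2.1], by linarith [hx.2.2]⟩
  have hFbound : ∀ n : ℕ, |∫ x in F, f x ^ n| ≤ r ^ n * (b - a) := by
    intro n
    have hμF : volume F < ⊤ :=
      lt_of_le_of_lt (measure_mono Set.diff_subset)
        (by rw [Real.volume_Ioc]; exact ENNReal.ofReal_lt_top)
    have h1 : ‖∫ x in F, f x ^ n‖ ≤ r ^ n * (volume F).toReal := by
      apply norm_setIntegral_le_of_norm_le_const hμF
      intro x hx
      have hxI : x ∈ Set.Icc a b := hIocIcc hx.1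
      have hxf : δ ≤ |x - c| := by
        by_contra h
        push_neg at h
        obtain ⟨h1, h2⟩ := abs_le.1 h.le
        exact hx.2 ⟨by linarith, by linarith⟩
      rw [Real.norm_eq_abs, abs_pow]
      exact pow_le_pow_left₀ (abs_nonneg _) (hrfar x hxI hxf) n
    have h2 : (volume F).toReal ≤ b - a := by
      have hm : volume F ≤ ENNReal.ofReal (b - a) := by
        rw [← Real.volume_Ioc]; exact measure_mono Set.diff_subset
      calc (volume F).toReal ≤ (ENNReal.ofReal (b - a)).toReal :=
            ENNReal.toReal_mono (by simp) hm
        _ = b - a := ENNReal.toReal_ofReal hba.le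
    rw [Real.norm_eq_abs] at h1
    exact h1.trans (mul_le_mul_of_nonneg_left h2 (pow_nonneg hr0 n))
  have hNlow : ∀ n : ℕ, ρ ^ n * (v - u) ≤ ∫ x in N, f x ^ n := by
    intro n
    have hsub : Set.Ioc u v ⊆ N := by
      intro x hx
      obtain ⟨hxI, hxd⟩ := hIuv x hx
      have hxd' : |x - c| ≤ δ := le_trans hxd (min_le_left _ _)
      obtain ⟨h1, h2⟩ := abs_le.1 hxd'
      exact ⟨⟨lt_of_le_of_lt hau hx.1, le_trans hx.2 hvb⟩, ⟨by linarith, by linarith⟩⟩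
    have h1 : ρ ^ n * (v - u) ≤ ∫ x in Set.Ioc u v, f x ^ n := by
      have hconst : ∫ _x in Set.Ioc u v, (ρ ^ n : ℝ) = ρ ^ n * (v - u) := by
        rw [setIntegral_const, Real.volume_real_Ioc, max_eq_left (by linarith),
          smul_eq_mul, mul_comm]
      rw [← hconst]
      apply setIntegral_mono_on
        (integrableOn_const (by rw [Real.volume_Ioc]; exact ENNReal.ofReal_ne_top))
        ((hfn n).mono_set (fun x hx => (hIuv x hx).1)) measurableSet_Ioc
      intro x hx
      obtain ⟨hxI, hxd⟩ := hIuv x hx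
      have hρx : ρ < f x := by
        have h := hnear x hxI (le_trans hxd (min_le_right _ _))
        linarith
      exact pow_le_pow_left₀ hρ0.le hρx.le n
    have h2 : ∫ x in Set.Ioc u v, f x ^ n ≤ ∫ x in N, f x ^ n := by
      apply setIntegral_mono_set ((hfnIoc n).mono_set Set.inter_subset_left)
      · filter_upwards [ae_restrict_mem hNmeas] with x hx
        obtain ⟨hxI, hxd⟩ := hNIcc x hx
        exact pow_nonneg (hδpos x hxI hxd) n
      · exact HasSubset.Subset.eventuallyLE hsub
    linarith
  intro K hK
  have hratio : Tendsto (fun n : ℕ => (r / ρ) ^ n) atTop (nhds 0) :=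
    tendsto_pow_atTop_nhds_zero_of_lt_one (div_nonneg hr0 hρ0.le) ((div_lt_one hρ0).2 hrρ)
  have hev : ∀ᶠ n : ℕ in atTop, (r / ρ) ^ n < (v - u) / ((K + 1) * (b - a)) :=
    hratio.eventually (gt_mem_nhds (by positivity))
  filter_upwards [hev] with n hn
  have halg : (K + 1) * (b - a) * r ^ n < (v - u) * ρ ^ n := by
    rw [div_pow, div_lt_div_iff₀ (pow_pos hρ0 n) (by positivity)] at hn
    nlinarith [hn]
  have hF := hFbound n
  have hN := hNlow n
  have hs := hsplit n
  have hFlow : -(r ^ n * (b - a)) ≤ ∫ x in F, f x ^ n := (abs_le.1 hF).1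
  nlinarith [hN, hFlow, hs, halg]

lemma laplace_pos (a b : ℝ) (hab : a < b) (f : ℝ → ℝ) (hf : ContinuousOn f (Set.Icc a b))
    (c : ℝ) (hc : c ∈ Set.Icc a b)
    (hmax : ∀ x ∈ Set.Icc a b, x ≠ c → |f x| < f c) (hfc : 0 < f c) :
    (∃ n₀ : ℕ, ∀ n ≥ n₀, (∫ x in a..b, f x ^ n) ≠ 0) ∧
      ∀ g : ℝ → ℝ, ContinuousOn g (Set.Icc a b) →
        Tendsto (fun n : ℕ => (∫ x in a..b, f x ^ n * g x) / ∫ x in a..b, f x ^ n)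
          atTop (nhds (g c)) := by
  have hba : (0:ℝ) < b - a := by linarith
  obtain ⟨δ₂, hδ₂, hpos₂⟩ := laplace_near a b f c hf hc (f c) hfc
  have hδpos₂ : ∀ x ∈ Set.Icc a b, |x - c| ≤ δ₂ → 0 ≤ f x := by
    intro x hx hxd
    have := hpos₂ x hx hxd
    linarith
  constructor
  · obtain ⟨r, hr0, _, hev⟩ := laplace_evP a b hab f hf c hc hmax hfc δ₂ hδ₂ hδpos₂
    obtain ⟨n₀, hn₀⟩ := (eventually_atTop).1 (hev 1 one_pos)
    refine ⟨n₀, fun n hn => ?_⟩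
    rw [intervalIntegral.integral_of_le hab.le]
    have h := hn₀ n hn
    have : (0:ℝ) ≤ 1 * (r ^ n * (b - a)) := by positivity
    linarith
  · intro g hg
    obtain ⟨G, hG⟩ := isCompact_Icc.exists_bound_of_continuousOn (hg.sub continuousOn_const)
    have hG0 : 0 ≤ G := le_trans (norm_nonneg _) (hG c hc)
    rw [Metric.tendsto_atTop]
    intro ε hε
    set ε0 := ε / 4 with hε0def
    have hε0 : 0 < ε0 := by rw [hε0def]; linarith
    obtain ⟨δ₁, hδ₁, hgc⟩ := Metric.continuousWithinAt_iff.1 (hg c hc) ε0 hε0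
    set δ := min (δ₁ / 2) δ₂ with hδdef
    have hδ : 0 < δ := lt_min (by linarith) hδ₂
    have hδpos : ∀ x ∈ Set.Icc a b, |x - c| ≤ δ → 0 ≤ f x := fun x hx hxd =>
      hδpos₂ x hx (le_trans hxd (min_le_right _ _))
    have hgsmall : ∀ x ∈ Set.Icc a b, |x - c| ≤ δ → |g x - g c| ≤ ε0 := by
      intro x hx hxd
      have h1 : dist x c < δ₁ := by
        rw [Real.dist_eq]
        have := le_trans hxd (min_le_left _ _)
        linarith
      have := hgc hx h1
      rw [Real.dist_eq] at this
      linarith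
    obtain ⟨r, hr0, hrfar, hev⟩ := laplace_evP a b hab f hf c hc hmax hfc δ hδ hδpos
    set K := (G + 1) / ε0 + 1 with hKdef
    have hK : 0 < K := by positivity
    have hK1 : 1 ≤ K := by
      rw [hKdef]
      have : 0 < (G + 1) / ε0 := by positivity
      linarith
    have hGK : G ≤ ε0 * K := by
      have h1 : ε0 * K = G + 1 + ε0 := by
        rw [hKdef]; field_simp
      linarith
    obtain ⟨n₁, hn₁⟩ := (eventually_atTop).1 (hev K hK)
    refine ⟨n₁, fun n hn => ?_⟩
    simp only [intervalIntegral.integral_of_le hab.le]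
    set s := ∫ x in Set.Ioc a b, f x ^ n with hsdef
    set t := ∫ x in Set.Ioc a b, f x ^ n * g x with htdef
    set T := ∫ x in Set.Ioc a b, f x ^ n * (g x - g c) with hTdef
    have hX0 : (0:ℝ) ≤ r ^ n * (b - a) := by positivity
    have hKX := hn₁ n hn
    have hs_pos : 0 < s := lt_of_le_of_lt (by positivity) hKX
    have hXs : r ^ n * (b - a) < s :=
      lt_of_le_of_lt (le_mul_of_one_le_left hX0 hK1) hKX
    -- integrability
    have hIocIcc : Set.Ioc a b ⊆ Set.Icc a b := Set.Ioc_subset_Icc_self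
    have hfn : IntegrableOn (fun x => f x ^ n) (Set.Ioc a b) :=
      ((hf.pow n).integrableOn_Icc).mono_set hIocIcc
    have hfng : IntegrableOn (fun x => f x ^ n * g x) (Set.Ioc a b) :=
      (((hf.pow n).mul hg).integrableOn_Icc).mono_set hIocIcc
    have hfnh : IntegrableOn (fun x => f x ^ n * (g x - g c)) (Set.Ioc a b) :=
      (((hf.pow n).mul (hg.sub continuousOn_const)).integrableOn_Icc).mono_set hIocIcc
    have hT : T = t - g c * s := by
      have heq : (fun x => f x ^ n * (g x - g c))
          = fun x => f x ^ n * g x - g c * f x ^ n := by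
        ext x; ring
      rw [hTdef, heq, integral_sub hfng (hfn.const_mul (g c)), integral_const_mul]
    -- split machinery
    set N := Set.Ioc a b ∩ Set.Icc (c - δ) (c + δ) with hNdef
    set F := Set.Ioc a b \ Set.Icc (c - δ) (c + δ) with hFdef
    have hNmeas : MeasurableSet N := measurableSet_Ioc.inter measurableSet_Icc
    have hμF : volume F < ⊤ :=
      lt_of_le_of_lt (measure_mono Set.diff_subset)
        (by rw [Real.volume_Ioc]; exact ENNReal.ofReal_lt_top)
    have hμFle : (volume F).toReal ≤ b - a := by
      have hm : volume F ≤ ENNReal.ofReal (b - a) := by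
        rw [← Real.volume_Ioc]; exact measure_mono Set.diff_subset
      calc (volume F).toReal ≤ (ENNReal.ofReal (b - a)).toReal :=
            ENNReal.toReal_mono (by simp) hm
        _ = b - a := ENNReal.toReal_ofReal hba.le
    have hFfar : ∀ x ∈ F, δ ≤ |x - c| := by
      intro x hx
      by_contra h
      push_neg at h
      obtain ⟨h1, h2⟩ := abs_le.1 h.le
      exact hx.2 ⟨by linarith, by linarith⟩
    have hNIcc : ∀ x ∈ N, x ∈ Set.Icc a b ∧ |x - c| ≤ δ := by
      intro x hx
      refine ⟨hIocIcc hx.1, ?_⟩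
      rw [abs_le]
      exact ⟨by linarith [hx.2.1], by linarith [hx.2.2]⟩
    -- splits
    have hsplit_s : (∫ x in N, f x ^ n) + ∫ x in F, f x ^ n = s :=
      integral_inter_add_diff measurableSet_Icc hfn
    have hsplit_T : (∫ x in N, f x ^ n * (g x - g c))
        + ∫ x in F, f x ^ n * (g x - g c) = T :=
      integral_inter_add_diff measurableSet_Icc hfnh
    -- far bounds
    have hFs : |∫ x in F, f x ^ n| ≤ r ^ n * (b - a) := by
      have h1 : ‖∫ x in F, f x ^ n‖ ≤ r ^ n * (volume F).toReal := by
        apply norm_setIntegral_le_of_norm_le_const hμF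
        intro x hx
        rw [Real.norm_eq_abs, abs_pow]
        exact pow_le_pow_left₀ (abs_nonneg _) (hrfar x (hIocIcc hx.1) (hFfar x hx)) n
      rw [Real.norm_eq_abs] at h1
      exact h1.trans (mul_le_mul_of_nonneg_left hμFle (pow_nonneg hr0 n))
    have hFT : |∫ x in F, f x ^ n * (g x - g c)| ≤ r ^ n * G * (b - a) := by
      have h1 : ‖∫ x in F, f x ^ n * (g x - g c)‖ ≤ r ^ n * G * (volume F).toReal := by
        apply norm_setIntegral_le_of_norm_le_const hμF
        intro x hx
        rw [Real.norm_eq_abs, abs_mul, abs_pow]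
        exact mul_le_mul (pow_le_pow_left₀ (abs_nonneg _)
          (hrfar x (hIocIcc hx.1) (hFfar x hx)) n)
          (by simpa using hG x (hIocIcc hx.1)) (abs_nonneg _) (by positivity)
      rw [Real.norm_eq_abs] at h1
      exact h1.trans (mul_le_mul_of_nonneg_left hμFle (by positivity))
    -- near bound
    have hNT : |∫ x in N, f x ^ n * (g x - g c)| ≤ ε0 * ∫ x in N, f x ^ n := by
      have h1 : |∫ x in N, f x ^ n * (g x - g c)|
          ≤ ∫ x in N, |f x ^ n * (g x - g c)| := by
        rw [← Real.norm_eq_abs]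
        exact (norm_integral_le_integral_norm _).trans
          (le_of_eq (by simp only [Real.norm_eq_abs]))
      have h2 : ∫ x in N, |f x ^ n * (g x - g c)| ≤ ∫ x in N, ε0 * f x ^ n := by
        apply setIntegral_mono_on ((hfnh.mono_set Set.inter_subset_left).abs)
          ((hfn.mono_set Set.inter_subset_left).const_mul ε0) hNmeas
        intro x hx
        obtain ⟨hxI, hxd⟩ := hNIcc x hx
        have hfx : 0 ≤ f x := hδpos x hxI hxd
        rw [abs_mul, abs_pow, abs_of_nonneg hfx, mul_comm ε0]
        exact mul_le_mul_of_nonneg_left (hgsmall x hxI hxd) (by positivity)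
      rw [integral_const_mul] at h2
      exact h1.trans h2
    -- combine
    have hNs : ∫ x in N, f x ^ n ≤ 2 * s := by
      have := (abs_le.1 hFs).1
      linarith
    have hNnn : 0 ≤ ∫ x in N, f x ^ n := by
      apply setIntegral_nonneg hNmeas
      intro x hx
      obtain ⟨hxI, hxd⟩ := hNIcc x hx
      exact pow_nonneg (hδpos x hxI hxd) n
    have hGX : G * (r ^ n * (b - a)) < ε0 * s := by
      have h5 : G * (r ^ n * (b - a)) ≤ ε0 * K * (r ^ n * (b - a)) :=
        mul_le_mul_of_nonneg_right hGK hX0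
      have h6 : ε0 * (K * (r ^ n * (b - a))) < ε0 * s :=
        mul_lt_mul_of_pos_left hKX hε0
      have h7 := mul_assoc ε0 K (r ^ n * (b - a))
      linarith
    have hTbound : |T| < 4 * (ε0 * s) := by
      have h1 : |T| ≤ ε0 * (2 * s) + r ^ n * G * (b - a) := by
        calc |T| ≤ |∫ x in N, f x ^ n * (g x - g c)|
              + |∫ x in F, f x ^ n * (g x - g c)| := by
              rw [← hsplit_T]; exact abs_add_le _ _
          _ ≤ ε0 * (2 * s) + r ^ n * G * (b - a) := by
              have := mul_le_mul_of_nonneg_left hNs hε0.le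
              linarith [hNT, hFT]
      have h2 : r ^ n * G * (b - a) = G * (r ^ n * (b - a)) := by ring
      have h9 : 0 < ε0 * s := by positivity
      linarith
    -- finish
    rw [Real.dist_eq]
    have hts : t / s - g c = T / s := by
      rw [hT]
      field_simp
    rw [hts, abs_div, abs_of_pos hs_pos, div_lt_iff₀ hs_pos]
    have h8 : ε * s = 4 * (ε0 * s) := by rw [hε0def]; ring
    linarith [hTbound]

set_option maxRecDepth 10000 in
set_option maxHeartbeats 1000000 in
/-- Let `f : [a,b] → ℝ` be continuous such that `|f|` has a unique maximum at `c`
with `f c ≠ 0`, and set `α_n = ∫_a^b f(x)^n dx`.  Then `α_n ≠ 0` eventually, and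
for every continuous `g : [a,b] → ℝ`,
`(1/α_n) ∫_a^b f(x)^n g(x) dx → g(c)` as `n → ∞`. -/
theorem laplace_type_asymptotics (a b : ℝ) (hab : a < b)
    (f : ℝ → ℝ) (hf : ContinuousOn f (Set.Icc a b))
    (c : ℝ) (hc : c ∈ Set.Icc a b)
    (hmax : ∀ x ∈ Set.Icc a b, x ≠ c → |f x| < |f c|)
    (hfc : f c ≠ 0) :
    (∃ n₀ : ℕ, ∀ n ≥ n₀, (∫ x in a..b, f x ^ n) ≠ 0) ∧
      ∀ g : ℝ → ℝ, ContinuousOn g (Set.Icc a b) →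
        Tendsto (fun n : ℕ => (∫ x in a..b, f x ^ n * g x) / ∫ x in a..b, f x ^ n)
          atTop (nhds (g c)) := by
  rcases hfc.lt_or_gt with hneg | hpos
  · -- f c < 0 : apply the positive case to -f
    have hmax' : ∀ x ∈ Set.Icc a b, x ≠ c → |(-f) x| < (-f) c := by
      intro x hx hxc
      have := hmax x hx hxc
      rw [abs_of_neg hneg] at this
      simpa using this
    obtain ⟨⟨n₀, h₀⟩, h₂⟩ := laplace_pos a b hab (-f) hf.neg c hc hmax'
      (by simpa using hneg)
    have key : ∀ n : ℕ, (∫ x in a..b, (-f) x ^ n)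
        = (-1 : ℝ) ^ n * ∫ x in a..b, f x ^ n := by
      intro n
      have hpt : (fun x => (-f) x ^ n) = fun x => (-1:ℝ) ^ n * f x ^ n := by
        funext x
        rw [Pi.neg_apply, neg_pow]
      rw [hpt, intervalIntegral.integral_const_mul]
    have keyg : ∀ (g : ℝ → ℝ) (n : ℕ), (∫ x in a..b, (-f) x ^ n * g x)
        = (-1 : ℝ) ^ n * ∫ x in a..b, f x ^ n * g x := by
      intro g n
      have hpt : (fun x => (-f) x ^ n * g x) = fun x => (-1:ℝ) ^ n * (f x ^ n * g x) := by
        funext x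
        rw [Pi.neg_apply, neg_pow]
        ring
      rw [hpt, intervalIntegral.integral_const_mul]
    constructor
    · refine ⟨n₀, fun n hn => ?_⟩
      have h := h₀ n hn
      rw [key n] at h
      intro h0
      rw [h0, mul_zero] at h
      exact h rfl
    · intro g hg
      have h := h₂ g hg
      apply h.congr
      intro n
      rw [key n, keyg g n,
        mul_div_mul_left _ _ (pow_ne_zero n (by norm_num : (-1:ℝ) ≠ 0))]
  · -- f c > 0
    have hmax' : ∀ x ∈ Set.Icc a b, x ≠ c → |f x| < f c := by
      intro x hx hxc
      have := hmax x hx hxc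
      rwa [abs_of_pos hpos] at this
    exact laplace_pos a b hab f hf c hc hmax' hpos
end

section
/- Consider the OQRW on ℤ generated by B = [[1,0],[0,√p]] and C = [[0,0],[0,√q]], where p + q = 1 and p, q ∈ [0,1], with initial density matrix ρ₀ whose diagonal entries are a and b (so a + b = 1, a, b ≥ 0). Then for all n ≥ 0 and x ∈ ℤ, the distribution is p_x^{(n)} = a·δ_{x,-n} + b·Σ_{l=0}^{n} C(n,l) p^l q^{n-l} δ_{x,n-2l}, where δ is the Kronecker delta and C(n,l) the binomial coefficient. -/
open MeasureTheory Filter Matrix Finset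
open scoped ComplexOrder

lemma oqrw_B00 (p : ℝ) (M : Matrix (Fin 2) (Fin 2) ℂ) :
    ((!![(1 : ℂ), 0; 0, (Real.sqrt p : ℂ)]) * M * (!![(1 : ℂ), 0; 0, (Real.sqrt p : ℂ)])ᴴ) 0 0 = M 0 0 := by
  simp [Matrix.mul_apply, Fin.sum_univ_two, Matrix.conjTranspose_apply, Matrix.vecMul, dotProduct]

lemma oqrw_B11 (p : ℝ) (hp : 0 ≤ p) (M : Matrix (Fin 2) (Fin 2) ℂ) :
    ((!![(1 : ℂ), 0; 0, (Real.sqrt p : ℂ)]) * M * (!![(1 : ℂ), 0; 0, (Real.sqrt p : ℂ)])ᴴ) 1 1 = (p:ℂ) * M 1 1 := by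
  simp [Matrix.mul_apply, Fin.sum_univ_two, Matrix.conjTranspose_apply, Matrix.vecMul, dotProduct]
  rw [show ((Real.sqrt p : ℂ)) * M 1 1 * (Real.sqrt p : ℂ) = ((Real.sqrt p : ℂ) * (Real.sqrt p : ℂ)) * M 1 1 by ring]
  norm_cast
  rw [Real.mul_self_sqrt hp]

lemma oqrw_C00 (q : ℝ) (M : Matrix (Fin 2) (Fin 2) ℂ) :
    ((!![(0 : ℂ), 0; 0, (Real.sqrt q : ℂ)]) * M * (!![(0 : ℂ), 0; 0, (Real.sqrt q : ℂ)])ᴴ) 0 0 = 0 := by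
  simp [Matrix.mul_apply, Fin.sum_univ_two, Matrix.conjTranspose_apply, Matrix.vecMul, dotProduct]

lemma oqrw_C11 (q : ℝ) (hq : 0 ≤ q) (M : Matrix (Fin 2) (Fin 2) ℂ) :
    ((!![(0 : ℂ), 0; 0, (Real.sqrt q : ℂ)]) * M * (!![(0 : ℂ), 0; 0, (Real.sqrt q : ℂ)])ᴴ) 1 1 = (q:ℂ) * M 1 1 := by
  simp [Matrix.mul_apply, Fin.sum_univ_two, Matrix.conjTranspose_apply, Matrix.vecMul, dotProduct]
  rw [show ((Real.sqrt q : ℂ)) * M 1 1 * (Real.sqrt q : ℂ) = ((Real.sqrt q : ℂ) * (Real.sqrt q : ℂ)) * M 1 1 by ring]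
  norm_cast
  rw [Real.mul_self_sqrt hq]

lemma oqrw_sum_step (p q : ℂ) (n : ℕ) (x : ℤ) :
    (∑ l ∈ Finset.range (n + 1 + 1),
      ((n+1).choose l : ℂ) * p ^ l * q ^ (n + 1 - l) *
        (if x = ((n:ℤ)+1) - 2 * l then 1 else 0)) =
    p * (∑ l ∈ Finset.range (n + 1),
      (n.choose l : ℂ) * p ^ l * q ^ (n - l) *
        (if x + 1 = (n : ℤ) - 2 * l then 1 else 0)) +
    q * (∑ l ∈ Finset.range (n + 1),
      (n.choose l : ℂ) * p ^ l * q ^ (n - l) *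
        (if x - 1 = (n : ℤ) - 2 * l then 1 else 0)) := by
  rw [Finset.sum_range_succ']
  have h1 : ∀ l ∈ Finset.range (n+1),
      ((n+1).choose (l+1) : ℂ) * p ^ (l+1) * q ^ (n + 1 - (l+1)) *
        (if x = ((n:ℤ)+1) - 2 * ((l:ℕ)+1 : ℕ) then 1 else 0)
      = (n.choose l : ℂ) * p ^ (l+1) * q ^ (n - l) *
          (if x = (n:ℤ) - 1 - 2 * l then 1 else 0)
        + (n.choose (l+1) : ℂ) * p ^ (l+1) * q ^ (n - l) *
          (if x = (n:ℤ) - 1 - 2 * l then 1 else 0) := by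
    intro l hl
    have e1 : n + 1 - (l + 1) = n - l := by omega
    have e2 : ((n:ℤ)+1) - 2 * ((l:ℕ)+1 : ℕ) = (n:ℤ) - 1 - 2 * l := by push_cast; ring
    rw [e1, e2, Nat.choose_succ_succ]
    push_cast
    ring
  rw [Finset.sum_congr rfl h1, Finset.sum_add_distrib]
  have h2 : p * (∑ l ∈ Finset.range (n + 1),
      (n.choose l : ℂ) * p ^ l * q ^ (n - l) *
        (if x + 1 = (n : ℤ) - 2 * l then 1 else 0)) =
      ∑ l ∈ Finset.range (n+1), (n.choose l : ℂ) * p ^ (l+1) * q ^ (n - l) *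
          (if x = (n:ℤ) - 1 - 2 * l then 1 else 0) := by
    rw [Finset.mul_sum]
    refine Finset.sum_congr rfl fun l hl => ?_
    have : (x + 1 = (n : ℤ) - 2 * l) ↔ (x = (n:ℤ) - 1 - 2 * l) := by omega
    simp only [this]
    ring
  have h3 : q * (∑ l ∈ Finset.range (n + 1),
      (n.choose l : ℂ) * p ^ l * q ^ (n - l) *
        (if x - 1 = (n : ℤ) - 2 * l then 1 else 0)) =
      (∑ l ∈ Finset.range (n+1), (n.choose (l+1) : ℂ) * p ^ (l+1) * q ^ (n - l) *
          (if x = (n:ℤ) - 1 - 2 * l then 1 else 0))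
      + ((n+1).choose 0 : ℂ) * p ^ 0 * q ^ (n + 1 - 0) *
          (if x = ((n:ℤ)+1) - 2 * ((0:ℕ):ℕ) then 1 else 0) := by
    rw [Finset.mul_sum, Finset.sum_range_succ']
    congr 1
    · rw [Finset.sum_range_succ]
      have hz : ((n.choose (n+1) : ℂ)) = 0 := by
        rw [Nat.choose_eq_zero_of_lt (by omega)]; push_cast; ring
      rw [hz]
      simp only [mul_zero, zero_mul, add_zero]
      refine Finset.sum_congr rfl fun k hk => ?_
      have hkn : k < n := Finset.mem_range.mp hk
      have e : n - k = n - (k+1) + 1 := by omega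
      have hc : (x - 1 = (n:ℤ) - 2 * ((k:ℕ)+1 : ℕ)) ↔ (x = (n:ℤ) - 1 - 2 * k) := by
        push_cast; omega
      rw [e, pow_succ]
      simp only [hc]
      ring
    · have hc : (x - 1 = (n:ℤ) - 2 * ((0:ℕ):ℤ)) ↔ (x = ((n:ℤ)+1) - 2 * ((0:ℕ):ℕ)) := by
        push_cast; omega
      simp only [Nat.cast_zero, Nat.choose_zero_right, Nat.cast_one, pow_zero, mul_zero,
        sub_zero, Nat.sub_zero] at *
      rw [pow_succ]
      by_cases h : x = (n:ℤ) + 1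
      · have : x - 1 = (n:ℤ) := by omega
        simp [h, this]; ring
      · have : ¬ (x - 1 = (n:ℤ)) := by omega
        simp [h, this]
  rw [h2, h3]
  ring

lemma oqrw_entry00 (p q a : ℝ) (ρ₀ : Matrix (Fin 2) (Fin 2) ℂ)
    (h00 : ρ₀ 0 0 = (a : ℂ)) :
    ∀ (n : ℕ) (x : ℤ),
      (oqrwState !![(1 : ℂ), 0; 0, (Real.sqrt p : ℂ)]
        !![(0 : ℂ), 0; 0, (Real.sqrt q : ℂ)] ρ₀ n x) 0 0
      = (a : ℂ) * (if x = -(n : ℤ) then 1 else 0) := by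
  intro n
  induction n with
  | zero =>
    intro x
    simp only [oqrwState, Nat.cast_zero, neg_zero]
    split_ifs with h <;> simp [h, h00]
  | succ n ih =>
    intro x
    simp only [oqrwState, Matrix.add_apply]
    rw [oqrw_B00, oqrw_C00, ih (x+1)]
    have : (x + 1 = -(n:ℤ)) ↔ (x = -((n:ℕ)+1 : ℕ)) := by push_cast; omega
    simp only [this]
    push_cast
    ring

lemma oqrw_entry11 (p q b : ℝ) (hp : 0 ≤ p) (hq : 0 ≤ q)
    (ρ₀ : Matrix (Fin 2) (Fin 2) ℂ) (h11 : ρ₀ 1 1 = (b : ℂ)) :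
    ∀ (n : ℕ) (x : ℤ),
      (oqrwState !![(1 : ℂ), 0; 0, (Real.sqrt p : ℂ)]
        !![(0 : ℂ), 0; 0, (Real.sqrt q : ℂ)] ρ₀ n x) 1 1
      = (b : ℂ) * ∑ l ∈ Finset.range (n + 1),
          (n.choose l : ℂ) * (p : ℂ) ^ l * (q : ℂ) ^ (n - l) *
            (if x = (n : ℤ) - 2 * l then 1 else 0) := by
  intro n
  induction n with
  | zero =>
    intro x
    simp only [oqrwState]
    split_ifs with h <;> simp [h, h11]
  | succ n ih =>
    intro x
    simp only [oqrwState, Matrix.add_apply]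
    rw [oqrw_B11 p hp, oqrw_C11 q hq, ih (x+1), ih (x-1)]
    have e : ((n:ℕ)+1 : ℕ) = ((n:ℤ)+1 : ℤ) := by push_cast; ring
    calc (p:ℂ) * ((b:ℂ) * ∑ l ∈ Finset.range (n + 1),
          (n.choose l : ℂ) * (p : ℂ) ^ l * (q : ℂ) ^ (n - l) *
            (if x + 1 = (n : ℤ) - 2 * l then 1 else 0))
        + (q:ℂ) * ((b:ℂ) * ∑ l ∈ Finset.range (n + 1),
          (n.choose l : ℂ) * (p : ℂ) ^ l * (q : ℂ) ^ (n - l) *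
            (if x - 1 = (n : ℤ) - 2 * l then 1 else 0))
        = (b:ℂ) * ((p:ℂ) * (∑ l ∈ Finset.range (n + 1),
          (n.choose l : ℂ) * (p : ℂ) ^ l * (q : ℂ) ^ (n - l) *
            (if x + 1 = (n : ℤ) - 2 * l then 1 else 0))
          + (q:ℂ) * (∑ l ∈ Finset.range (n + 1),
          (n.choose l : ℂ) * (p : ℂ) ^ l * (q : ℂ) ^ (n - l) *
            (if x - 1 = (n : ℤ) - 2 * l then 1 else 0))) := by ring
      _ = (b : ℂ) * ∑ l ∈ Finset.range (n + 1 + 1),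
          ((n+1).choose l : ℂ) * (p : ℂ) ^ l * (q : ℂ) ^ (n + 1 - l) *
            (if x = ((n:ℤ)+1) - 2 * l then 1 else 0) := by
            rw [oqrw_sum_step]
      _ = (b : ℂ) * ∑ l ∈ Finset.range (n + 1 + 1),
          ((n+1).choose l : ℂ) * (p : ℂ) ^ l * (q : ℂ) ^ (n + 1 - l) *
            (if x = (((n:ℕ)+1 : ℕ) : ℤ) - 2 * l then 1 else 0) := by
            push_cast
            ring_nf
            exact congrArg _ (Finset.sum_congr rfl fun l _ => by ring)

/-- Example 1: the distribution of the OQRW generated by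
`B = [[1,0],[0,√p]]`, `C = [[0,0],[0,√q]]` with `p+q=1`, started at a density
matrix with diagonal entries `a, b`, is
`p_x^{(n)} = a δ_{x,-n} + b Σ_{l=0}^n C(n,l) p^l q^{n-l} δ_{x,n-2l}`. -/
theorem oqrw_example1_distribution (p q a b : ℝ)
    (hpq : p + q = 1) (hp : p ∈ Set.Icc (0:ℝ) 1) (hq : q ∈ Set.Icc (0:ℝ) 1)
    (ha : 0 ≤ a) (hb : 0 ≤ b) (hab : a + b = 1)
    (ρ₀ : Matrix (Fin 2) (Fin 2) ℂ) (hpos : ρ₀.PosSemidef)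
    (h00 : ρ₀ 0 0 = (a : ℂ)) (h11 : ρ₀ 1 1 = (b : ℂ))
    (n : ℕ) (x : ℤ) :
    (oqrwState !![(1 : ℂ), 0; 0, (Real.sqrt p : ℂ)]
        !![(0 : ℂ), 0; 0, (Real.sqrt q : ℂ)] ρ₀ n x).trace =
      (a : ℂ) * (if x = -(n : ℤ) then 1 else 0) +
        (b : ℂ) * ∑ l ∈ Finset.range (n + 1),
          (n.choose l : ℂ) * (p : ℂ) ^ l * (q : ℂ) ^ (n - l) *
            (if x = (n : ℤ) - 2 * l then 1 else 0) := by
  rw [Matrix.trace_fin_two, oqrw_entry00 p q a ρ₀ h00 n x,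
    oqrw_entry11 p q b hp.1 hq.1 ρ₀ h11 n x]
end

section
/- Consider the OQRW on ℤ generated by B = [[1,0],[0,√p]] and C = [[0,0],[0,√q]], where p + q = 1 and p ∈ (0,1), with initial density matrix ρ₀ whose diagonal entries are a and b (a + b = 1, a, b ≥ 0). Let μ_n be the probability measure on ℝ assigning mass p_x^{(n)} to the point x/n. Then μ_n converges weakly, as n → ∞, to the measure a·δ_{-1} + b·δ_{q-p} (a mixture of Dirac measures at −1 and q − p). -/
open MeasureTheory Filter Matrix
open scoped ComplexOrder

/-- The distribution `p_x^{(n)} = Tr(ρ_x^{(n)})` of the OQRW. -/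
noncomputable def oqrwProb (B C ρ₀ : Matrix (Fin 2) (Fin 2) ℂ) (n : ℕ) (x : ℤ) : ℝ :=
  ((oqrwState B C ρ₀ n x).trace).re

namespace OqrwAux

/-- The expectation of `g` under the binomial-type distribution on `{-n, -n+2, …, n}`. -/
noncomputable def binSum (p q : ℝ) (n : ℕ) (g : ℤ → ℂ) : ℂ :=
  ∑ k ∈ Finset.range (n+1),
    (n.choose k : ℂ) * (p:ℂ)^(n-k) * (q:ℂ)^k * g (2*(k:ℤ) - (n:ℤ))

lemma binSum_rec (p q : ℝ) (n : ℕ) (g : ℤ → ℂ) :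
    binSum p q (n+1) g
      = (p:ℂ) * binSum p q n (fun x => g (x - 1))
        + (q:ℂ) * binSum p q n (fun x => g (x + 1)) := by
  have peelL : binSum p q (n+1) g
      = (∑ k ∈ Finset.range (n+1),
            ((n+1).choose (k+1) : ℂ) * (p:ℂ)^(n-k) * (q:ℂ)^(k+1) * g (2*(k:ℤ) - (n:ℤ) + 1))
        + (p:ℂ)^(n+1) * g (-(n:ℤ) - 1) := by
    unfold binSum
    rw [Finset.sum_range_succ']
    congr 1
    · refine Finset.sum_congr rfl fun k hk => ?_
      have h1 : n + 1 - (k+1) = n - k := by omega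
      rw [h1]
      congr 1
      push_cast; ring
    · simp only [Nat.choose_zero_right, Nat.cast_one, one_mul, pow_zero, mul_one,
        Nat.sub_zero, Nat.cast_zero]
      congr 1
      push_cast; ring
  have peelR : (p:ℂ) * binSum p q n (fun x => g (x - 1))
      = (∑ k ∈ Finset.range n,
            (n.choose (k+1) : ℂ) * (p:ℂ)^(n-k) * (q:ℂ)^(k+1) * g (2*(k:ℤ) - (n:ℤ) + 1))
        + (p:ℂ)^(n+1) * g (-(n:ℤ) - 1) := by
    unfold binSum
    rw [Finset.mul_sum, Finset.sum_range_succ']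
    congr 1
    · refine Finset.sum_congr rfl fun k hk => ?_
      rw [Finset.mem_range] at hk
      have h1 : n - k = (n - (k+1)) + 1 := by omega
      rw [h1, pow_succ]
      have h2 : (2*((k:ℤ)+1) - (n:ℤ) - 1) = 2*(k:ℤ) - (n:ℤ) + 1 := by ring
      push_cast
      rw [h2]
      ring
    · simp
      push_cast
      ring_nf
  have qpart : (q:ℂ) * binSum p q n (fun x => g (x + 1))
      = ∑ k ∈ Finset.range (n+1),
          (n.choose k : ℂ) * (p:ℂ)^(n-k) * (q:ℂ)^(k+1) * g (2*(k:ℤ) - (n:ℤ) + 1) := by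
    unfold binSum
    rw [Finset.mul_sum]
    refine Finset.sum_congr rfl fun k hk => ?_
    ring
  have split : (∑ k ∈ Finset.range (n+1),
        ((n+1).choose (k+1) : ℂ) * (p:ℂ)^(n-k) * (q:ℂ)^(k+1) * g (2*(k:ℤ) - (n:ℤ) + 1))
      = (∑ k ∈ Finset.range n,
            (n.choose (k+1) : ℂ) * (p:ℂ)^(n-k) * (q:ℂ)^(k+1) * g (2*(k:ℤ) - (n:ℤ) + 1))
        + ∑ k ∈ Finset.range (n+1),
            (n.choose k : ℂ) * (p:ℂ)^(n-k) * (q:ℂ)^(k+1) * g (2*(k:ℤ) - (n:ℤ) + 1) := by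
    have e : ∀ k ∈ Finset.range (n+1),
        ((n+1).choose (k+1) : ℂ) * (p:ℂ)^(n-k) * (q:ℂ)^(k+1) * g (2*(k:ℤ) - (n:ℤ) + 1)
        = (n.choose (k+1) : ℂ) * (p:ℂ)^(n-k) * (q:ℂ)^(k+1) * g (2*(k:ℤ) - (n:ℤ) + 1)
          + (n.choose k : ℂ) * (p:ℂ)^(n-k) * (q:ℂ)^(k+1) * g (2*(k:ℤ) - (n:ℤ) + 1) := by
      intro k hk
      rw [Nat.choose_succ_succ']
      push_cast
      ring
    rw [Finset.sum_congr rfl e, Finset.sum_add_distrib]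
    congr 1
    rw [Finset.sum_range_succ, Nat.choose_succ_self]
    simp
  rw [peelL, peelR, qpart, split]
  ring

/-- Our matrix `B`. -/
noncomputable def Bm (p : ℝ) : Matrix (Fin 2) (Fin 2) ℂ :=
  !![(1 : ℂ), 0; 0, (Real.sqrt p : ℂ)]

/-- Our matrix `C`. -/
noncomputable def Cm (q : ℝ) : Matrix (Fin 2) (Fin 2) ℂ :=
  !![(0 : ℂ), 0; 0, (Real.sqrt q : ℂ)]

lemma entryB00 (p : ℝ) (M : Matrix (Fin 2) (Fin 2) ℂ) :
    (Bm p * M * (Bm p)ᴴ) 0 0 = M 0 0 := by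
  simp [Bm, Matrix.mul_apply, Matrix.vecMul, dotProduct, Fin.sum_univ_two,
    Matrix.conjTranspose_apply]

lemma entryB11 (p : ℝ) (hp : 0 ≤ p) (M : Matrix (Fin 2) (Fin 2) ℂ) :
    (Bm p * M * (Bm p)ᴴ) 1 1 = (p : ℂ) * M 1 1 := by
  have : ((Real.sqrt p : ℂ))^2 = (p : ℂ) := by
    rw [← Complex.ofReal_pow, Real.sq_sqrt hp]
  simp only [Bm, Matrix.mul_apply, Matrix.vecMul, dotProduct, Fin.sum_univ_two,
    Matrix.conjTranspose_apply]
  simp [← this]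
  ring

lemma entryC00 (q : ℝ) (M : Matrix (Fin 2) (Fin 2) ℂ) :
    (Cm q * M * (Cm q)ᴴ) 0 0 = 0 := by
  simp [Cm, Matrix.mul_apply, Matrix.vecMul, dotProduct, Fin.sum_univ_two,
    Matrix.conjTranspose_apply]

lemma entryC11 (q : ℝ) (hq : 0 ≤ q) (M : Matrix (Fin 2) (Fin 2) ℂ) :
    (Cm q * M * (Cm q)ᴴ) 1 1 = (q : ℂ) * M 1 1 := by
  have : ((Real.sqrt q : ℂ))^2 = (q : ℂ) := by
    rw [← Complex.ofReal_pow, Real.sq_sqrt hq]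
  simp only [Cm, Matrix.mul_apply, Matrix.vecMul, dotProduct, Fin.sum_univ_two,
    Matrix.conjTranspose_apply]
  simp [← this]
  ring

lemma state_supp (B C ρ₀ : Matrix (Fin 2) (Fin 2) ℂ) :
    ∀ (n : ℕ) (x : ℤ), (x < -(n:ℤ) ∨ (n:ℤ) < x) → oqrwState B C ρ₀ n x = 0 := by
  intro n
  induction n with
  | zero =>
      intro x hx
      have hx0 : x ≠ 0 := by simp at hx; omega
      simp [oqrwState, hx0]
  | succ n ih =>
      intro x hx
      have h1 : oqrwState B C ρ₀ n (x+1) = 0 := by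
        apply ih; push_cast at hx ⊢; omega
      have h2 : oqrwState B C ρ₀ n (x-1) = 0 := by
        apply ih; push_cast at hx ⊢; omega
      show B * oqrwState B C ρ₀ n (x + 1) * Bᴴ + C * oqrwState B C ρ₀ n (x - 1) * Cᴴ = 0
      rw [h1, h2]
      simp

lemma summable_state11 (B C ρ₀ : Matrix (Fin 2) (Fin 2) ℂ) (n : ℕ) (c : ℤ) (g : ℤ → ℂ) :
    Summable (fun x : ℤ => oqrwState B C ρ₀ n (x + c) 1 1 * g x) := by
  apply summable_of_ne_finset_zero (s := Finset.Icc (-(n:ℤ) - c) ((n:ℤ) - c))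
  intro x hx
  rw [Finset.mem_Icc] at hx
  rw [state_supp B C ρ₀ n (x + c) (by omega)]
  simp

lemma summable_state11_re (B C ρ₀ : Matrix (Fin 2) (Fin 2) ℂ) (n : ℕ) (g : ℤ → ℝ) :
    Summable (fun x : ℤ => (oqrwState B C ρ₀ n x 1 1 * (g x : ℂ)).re) := by
  apply summable_of_ne_finset_zero (s := Finset.Icc (-(n:ℤ)) ((n:ℤ)))
  intro x hx
  rw [Finset.mem_Icc] at hx
  rw [state_supp B C ρ₀ n x (by omega)]
  simp

lemma state00 (p q : ℝ) (ρ₀ : Matrix (Fin 2) (Fin 2) ℂ) (n : ℕ) (x : ℤ) :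
    oqrwState (Bm p) (Cm q) ρ₀ n x 0 0 = if x = -(n:ℤ) then ρ₀ 0 0 else 0 := by
  induction n generalizing x with
  | zero =>
      show (if x = 0 then ρ₀ else 0) 0 0 = _
      rw [apply_ite (fun M : Matrix (Fin 2) (Fin 2) ℂ => M 0 0)]
      simp
  | succ n ih =>
      show (Bm p * oqrwState (Bm p) (Cm q) ρ₀ n (x + 1) * (Bm p)ᴴ
          + Cm q * oqrwState (Bm p) (Cm q) ρ₀ n (x - 1) * (Cm q)ᴴ) 0 0 = _
      rw [Matrix.add_apply, entryB00, entryC00, ih (x+1), add_zero]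
      have hiff : x + 1 = -(n:ℤ) ↔ x = -((n+1 : ℕ):ℤ) := by push_cast; omega
      simp only [hiff]

lemma state11_tsum (p q : ℝ) (hp : 0 ≤ p) (hq : 0 ≤ q) (ρ₀ : Matrix (Fin 2) (Fin 2) ℂ) :
    ∀ (n : ℕ) (g : ℤ → ℂ),
      ∑' x : ℤ, oqrwState (Bm p) (Cm q) ρ₀ n x 1 1 * g x = ρ₀ 1 1 * binSum p q n g := by
  intro n
  induction n with
  | zero =>
      intro g
      rw [tsum_eq_single (0 : ℤ) (by
        intro x hx
        show (if x = 0 then ρ₀ else 0) 1 1 * g x = 0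
        rw [if_neg hx]
        simp)]
      show (if (0:ℤ) = 0 then ρ₀ else 0) 1 1 * g 0 = _
      rw [if_pos rfl]
      simp [binSum]
  | succ n ih =>
      intro g
      have hstep : ∀ x : ℤ, oqrwState (Bm p) (Cm q) ρ₀ (n+1) x 1 1 * g x
          = (p:ℂ) * (oqrwState (Bm p) (Cm q) ρ₀ n (x + 1) 1 1 * g x)
            + (q:ℂ) * (oqrwState (Bm p) (Cm q) ρ₀ n (x - 1) 1 1 * g x) := by
        intro x
        show (Bm p * oqrwState (Bm p) (Cm q) ρ₀ n (x + 1) * (Bm p)ᴴ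
            + Cm q * oqrwState (Bm p) (Cm q) ρ₀ n (x - 1) * (Cm q)ᴴ) 1 1 * g x = _
        rw [Matrix.add_apply, entryB11 p hp, entryC11 q hq]
        ring
      rw [tsum_congr hstep, Summable.tsum_add
        ((summable_state11 (Bm p) (Cm q) ρ₀ n 1 g).mul_left _)
        (((summable_state11 (Bm p) (Cm q) ρ₀ n (-1) g).congr
          (fun x => by rw [← sub_eq_add_neg])).mul_left _),
        tsum_mul_left, tsum_mul_left]
      have e1 : ∑' x : ℤ, oqrwState (Bm p) (Cm q) ρ₀ n (x + 1) 1 1 * g x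
          = ∑' y : ℤ, oqrwState (Bm p) (Cm q) ρ₀ n y 1 1 * g (y - 1) := by
        rw [← (Equiv.addRight (1:ℤ)).tsum_eq
          (fun y => oqrwState (Bm p) (Cm q) ρ₀ n y 1 1 * g (y - 1))]
        apply tsum_congr
        intro x
        simp
      have e2 : ∑' x : ℤ, oqrwState (Bm p) (Cm q) ρ₀ n (x - 1) 1 1 * g x
          = ∑' y : ℤ, oqrwState (Bm p) (Cm q) ρ₀ n y 1 1 * g (y + 1) := by
        rw [← (Equiv.subRight (1:ℤ)).tsum_eq
          (fun y => oqrwState (Bm p) (Cm q) ρ₀ n y 1 1 * g (y + 1))]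
        apply tsum_congr
        intro x
        simp
      rw [e1, e2, ih, ih, binSum_rec]
      ring

end OqrwAux

open OqrwAux in
/-- Example 1, law of large numbers: for the OQRW generated by
`B = [[1,0],[0,√p]]`, `C = [[0,0],[0,√q]]` with `p ∈ (0,1)`, the measures
assigning mass `p_x^{(n)}` to `x/n` converge weakly to `a δ_{-1} + b δ_{q-p}`. -/
theorem oqrw_example1_lln (p q a b : ℝ)
    (hpq : p + q = 1) (hp : 0 < p) (hp1 : p < 1)
    (ha : 0 ≤ a) (hb : 0 ≤ b) (hab : a + b = 1)
    (ρ₀ : Matrix (Fin 2) (Fin 2) ℂ) (hpos : ρ₀.PosSemidef)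
    (h00 : ρ₀ 0 0 = (a : ℂ)) (h11 : ρ₀ 1 1 = (b : ℂ)) :
    ∀ f : BoundedContinuousFunction ℝ ℝ,
      Tendsto (fun n : ℕ => ∑' x : ℤ,
          oqrwProb !![(1 : ℂ), 0; 0, (Real.sqrt p : ℂ)]
              !![(0 : ℂ), 0; 0, (Real.sqrt q : ℂ)] ρ₀ n x * f ((x : ℝ) / n))
        atTop (nhds (a * f (-1) + b * f (q - p))) := by
  intro f
  have hq0 : 0 ≤ q := by linarith
  have hq1 : q ≤ 1 := by linarith
  have hqI : q ∈ unitInterval := ⟨hq0, hq1⟩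
  -- the continuous function t ↦ f (2t - 1) on [0,1]
  set F : C(unitInterval, ℝ) :=
    ⟨fun t => f (2 * (t : ℝ) - 1), by
      apply f.continuous.comp
      continuity⟩ with hF
  set x0 : unitInterval := ⟨q, hqI⟩ with hx0
  -- key identity for n ≥ 1
  have key : ∀ n : ℕ, 1 ≤ n →
      (∑' x : ℤ, oqrwProb !![(1 : ℂ), 0; 0, (Real.sqrt p : ℂ)]
          !![(0 : ℂ), 0; 0, (Real.sqrt q : ℂ)] ρ₀ n x * f ((x : ℝ) / n))
      = a * f (-1) + b * (bernsteinApproximation n F x0) := by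
    intro n hn
    have hBm : !![(1 : ℂ), 0; 0, (Real.sqrt p : ℂ)] = Bm p := rfl
    have hCm : !![(0 : ℂ), 0; 0, (Real.sqrt q : ℂ)] = Cm q := rfl
    rw [hBm, hCm]
    set g : ℤ → ℝ := fun x => f ((x : ℝ) / n) with hg
    -- pointwise decomposition of the summand
    have hdec : ∀ x : ℤ,
        oqrwProb (Bm p) (Cm q) ρ₀ n x * g x
        = (if x = -(n:ℤ) then a * g (-(n:ℤ)) else 0)
          + (oqrwState (Bm p) (Cm q) ρ₀ n x 1 1 * (g x : ℂ)).re := by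
      intro x
      unfold oqrwProb
      rw [Matrix.trace_fin_two, Complex.add_re, state00 p q ρ₀ n x]
      rw [apply_ite Complex.re]
      by_cases hx : x = -(n:ℤ)
      · subst hx
        simp [h00, Complex.mul_re]
        ring
      · simp [hx, Complex.mul_re]
    rw [tsum_congr hdec, Summable.tsum_add (summable_of_ne_finset_zero (s := {-(n:ℤ)}) (by
        intro x hx
        simp at hx
        rw [if_neg hx]))
      (summable_state11_re _ _ _ n g), tsum_ite_eq]
    have h2 : ∑' x : ℤ, (oqrwState (Bm p) (Cm q) ρ₀ n x 1 1 * (g x : ℂ)).re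
        = (∑' x : ℤ, oqrwState (Bm p) (Cm q) ρ₀ n x 1 1 * (g x : ℂ)).re := by
      rw [Complex.re_tsum]
      exact (summable_state11 (Bm p) (Cm q) ρ₀ n 0 (fun x => (g x : ℂ))).congr
        (fun x => by rw [add_zero])
    rw [h2, state11_tsum p q hp.le hq0 ρ₀ n, h11]
    -- compute the real value of b * binSum
    have hbin : binSum p q n (fun x => ((g x : ℝ) : ℂ))
        = ((∑ k ∈ Finset.range (n+1),
            (n.choose k : ℝ) * p^(n-k) * q^k * g (2*(k:ℤ) - (n:ℤ)) : ℝ) : ℂ) := by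
      unfold binSum
      push_cast
      rfl
    rw [hbin]
    have hre : ((b : ℂ) * ((∑ k ∈ Finset.range (n+1),
        (n.choose k : ℝ) * p^(n-k) * q^k * g (2*(k:ℤ) - (n:ℤ)) : ℝ) : ℂ)).re
        = b * ∑ k ∈ Finset.range (n+1),
            (n.choose k : ℝ) * p^(n-k) * q^k * g (2*(k:ℤ) - (n:ℤ)) := by
      rw [← Complex.ofReal_mul, Complex.ofReal_re]
    rw [hre]
    have hn0 : (n : ℝ) ≠ 0 := by positivity
    -- first term
    have hterm1 : g (-(n:ℤ)) = f (-1) := by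
      simp only [hg]
      congr 1
      push_cast
      field_simp
    -- bernstein identification
    have hbern : bernsteinApproximation n F x0
        = ∑ k ∈ Finset.range (n+1),
            (n.choose k : ℝ) * p^(n-k) * q^k * g (2*(k:ℤ) - (n:ℤ)) := by
      rw [bernsteinApproximation.apply,
        ← Fin.sum_univ_eq_sum_range
          (fun k => (n.choose k : ℝ) * p^(n-k) * q^k * g (2*(k:ℤ) - (n:ℤ))) (n+1)]
      refine Finset.sum_congr rfl fun k _ => ?_
      have hz : F (bernstein.z k) = g (2*((k:ℕ):ℤ) - (n:ℤ)) := by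
        show f (2 * (((k:ℕ) : ℝ) / n) - 1) = f (((2*((k:ℕ):ℤ) - (n:ℤ) : ℤ) : ℝ) / n)
        congr 1
        push_cast
        field_simp
      rw [bernstein_apply, hz]
      have h1q : 1 - q = p := by linarith
      rw [hx0]
      show ((n.choose (k:ℕ) : ℝ) * q ^ (k:ℕ) * (1 - q) ^ (n - (k:ℕ))) * g (2*((k:ℕ):ℤ) - (n:ℤ)) = _
      rw [h1q]
      ring
    rw [hbern, hterm1]
  -- now take limits
  have hBtend : Tendsto (fun n : ℕ => bernsteinApproximation n F x0) atTop (nhds (F x0)) :=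
    ((continuous_eval_const x0).tendsto F).comp (bernsteinApproximation_uniform F)
  have hFx0 : F x0 = f (q - p) := by
    show f (2 * q - 1) = f (q - p)
    congr 1
    linarith
  have hlim : Tendsto (fun n : ℕ => a * f (-1) + b * (bernsteinApproximation n F x0)) atTop
      (nhds (a * f (-1) + b * f (q - p))) := by
    rw [← hFx0]
    exact tendsto_const_nhds.add (hBtend.const_mul b)
  apply hlim.congr'
  filter_upwards [eventually_ge_atTop 1] with n hn
  exact (key n hn).symm
end

section
/- Let B = [[b₁₁,0],[b₂₁,0]] and C = [[0,c₁₂],[0,c₂₂]] be 2×2 complex matrices such that B + C is unitary, and suppose p = |b₁₁|² = 1 − |b₂₁|² = |c₂₂|² = 1 − |c₁₂|². Let P₁ = [[1,0],[0,0]], P₂ = [[0,0],[0,1]], and let Y_n(k) be the dual process of the OQRW generated by B and C. Then Y_n(k) = a₁^{(n)}(k) P₁ + a₂^{(n)}(k) P₂, where the column vector (a₁^{(n)}(k), a₂^{(n)}(k)) equals M(k)^n applied to (1,1), with M(k) = [[e^{ik} p, e^{ik}(1−p)], [e^{-ik}(1−p), e^{-ik} p]]. -/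
open MeasureTheory Filter Matrix

/-- The matrix `M(k) = [[e^{ik}p, e^{ik}(1-p)],[e^{-ik}(1-p), e^{-ik}p]]`. -/
noncomputable def exM (p : ℝ) (k : ℝ) : Matrix (Fin 2) (Fin 2) ℂ :=
  !![Complex.exp (Complex.I * k) * (p : ℂ), Complex.exp (Complex.I * k) * ((1 : ℂ) - p);
     Complex.exp (-(Complex.I * k)) * ((1 : ℂ) - p), Complex.exp (-(Complex.I * k)) * (p : ℂ)]

/-- Example 2: for `B = [[b₁₁,0],[b₂₁,0]]`, `C = [[0,c₁₂],[0,c₂₂]]` with `B + C`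
unitary and `p = |b₁₁|² = 1-|b₂₁|² = |c₂₂|² = 1-|c₁₂|²`, the dual process is
`Y_n(k) = a₁^{(n)}(k) P₁ + a₂^{(n)}(k) P₂` where `(a₁^{(n)}, a₂^{(n)}) = M(k)^n (1,1)`. -/
theorem oqrw_example2_dual (b11 b21 c12 c22 : ℂ) (p : ℝ)
    (hU : !![b11, 0; b21, 0] + !![0, c12; 0, c22] ∈ unitary (Matrix (Fin 2) (Fin 2) ℂ))
    (hb11 : ‖b11‖ ^ 2 = p) (hb21 : ‖b21‖ ^ 2 = 1 - p)
    (hc22 : ‖c22‖ ^ 2 = p) (hc12 : ‖c12‖ ^ 2 = 1 - p)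
    (n : ℕ) (k : ℝ) :
    oqrwDual !![b11, 0; b21, 0] !![0, c12; 0, c22] n k =
      ((exM p k ^ n *ᵥ ![1, 1]) 0) • !![(1 : ℂ), 0; 0, 0] +
        ((exM p k ^ n *ᵥ ![1, 1]) 1) • !![(0 : ℂ), 0; 0, 1] := by

  have h1 : (starRingEnd ℂ) b11 * b11 = (p : ℂ) := by
    rw [mul_comm, Complex.mul_conj, ← Complex.sq_norm, hb11]
  have h2 : (starRingEnd ℂ) b21 * b21 = 1 - (p : ℂ) := by
    rw [mul_comm, Complex.mul_conj, ← Complex.sq_norm, hb21]; push_cast; ring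
  have h3 : (starRingEnd ℂ) c22 * c22 = (p : ℂ) := by
    rw [mul_comm, Complex.mul_conj, ← Complex.sq_norm, hc22]
  have h4 : (starRingEnd ℂ) c12 * c12 = 1 - (p : ℂ) := by
    rw [mul_comm, Complex.mul_conj, ← Complex.sq_norm, hc12]; push_cast; ring
  induction n with
  | zero =>
    ext i j
    fin_cases i <;> fin_cases j <;>
      simp [oqrwDual, Matrix.one_apply]
  | succ n ih =>
    set a := (exM p k ^ n *ᵥ ![1, 1]) 0 with ha
    set b := (exM p k ^ n *ᵥ ![1, 1]) 1 with hb
    have hv : exM p k ^ (n + 1) *ᵥ ![1, 1] = exM p k *ᵥ ![a, b] := by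
      have hab : ![a, b] = exM p k ^ n *ᵥ ![1, 1] := by
        ext i; fin_cases i <;> simp [ha, hb]
      rw [pow_succ', ← Matrix.mulVec_mulVec, hab]
    have hv0 : (exM p k ^ (n + 1) *ᵥ ![1, 1]) 0
        = Complex.exp (Complex.I * k) * (p * a + (1 - p) * b) := by
      rw [hv]; simp [exM, Matrix.mulVec, dotProduct, Fin.sum_univ_two]; try ring
    have hv1 : (exM p k ^ (n + 1) *ᵥ ![1, 1]) 1
        = Complex.exp (-(Complex.I * k)) * ((1 - p) * a + p * b) := by
      rw [hv]; simp [exM, Matrix.mulVec, dotProduct, Fin.sum_univ_two]; try ring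
    rw [show oqrwDual !![b11, 0; b21, 0] !![0, c12; 0, c22] (n+1) k =
      Complex.exp (Complex.I * k) • ((!![b11, 0; b21, 0])ᴴ *
        oqrwDual !![b11, 0; b21, 0] !![0, c12; 0, c22] n k * !![b11, 0; b21, 0]) +
      Complex.exp (-(Complex.I * k)) • ((!![0, c12; 0, c22])ᴴ *
        oqrwDual !![b11, 0; b21, 0] !![0, c12; 0, c22] n k * !![0, c12; 0, c22]) from rfl,
      ih, hv0, hv1]
    ext i j
    fin_cases i <;> fin_cases j <;>
      simp [Matrix.mul_apply, Fin.sum_univ_two, Matrix.conjTranspose_apply] <;>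
      first
        | linear_combination a * h1 + b * h2
        | linear_combination a * h4 + b * h3
        | ring
end

section
/- Let B = [[b₁₁,0],[b₂₁,0]] and C = [[0,c₁₂],[0,c₂₂]] with B + C unitary and p = |b₁₁|² = 1 − |b₂₁|² = |c₂₂|² = 1 − |c₁₂|². With a₁^{(n)}(k), a₂^{(n)}(k) as in the dual-process decomposition Y_n(k) = a₁^{(n)}(k) P₁ + a₂^{(n)}(k) P₂ (where (a₁^{(n)},a₂^{(n)}) = M(k)^n (1,1), M(k) = [[e^{ik}p, e^{ik}(1−p)],[e^{-ik}(1−p), e^{-ik}p]]), define p_j^{(n)}(x) = (1/(2π)) ∫_{-π}^{π} e^{ikx} a_j^{(n)}(k) dk for j = 1,2. Then: (1) p₁^{(n+1)}(x) = p·p₁^{(n)}(x+1) + (1−p)·p₂^{(n)}(x+1) and p₂^{(n+1)}(x) = (1−p)·p₁^{(n)}(x−1) + p·p₂^{(n)}(x−1) for all n ≥ 0 and x ∈ ℤ; (2) if the OQRW has initial density matrix ρ₀ with diagonal entries a and b, then its distribution satisfies p_x^{(n)} = a·p₁^{(n)}(x) + b·p₂^{(n)}(x). -/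
open MeasureTheory Filter Matrix
open scoped ComplexOrder

/-- The coefficients `a_j^{(n)}(k)`, `j = 1, 2`, given by `M(k)^n (1,1)`. -/
noncomputable def exA (p : ℝ) (j : Fin 2) (n : ℕ) (k : ℝ) : ℂ :=
  (exM p k ^ n *ᵥ ![1, 1]) j

/-- `p_j^{(n)}(x) = (1/(2π)) ∫_{-π}^{π} e^{ikx} a_j^{(n)}(k) dk`. -/
noncomputable def exP (p : ℝ) (j : Fin 2) (n : ℕ) (x : ℤ) : ℂ :=
  (1 / (2 * (Real.pi : ℂ))) *
    ∫ k in (-Real.pi)..Real.pi, Complex.exp (Complex.I * k * x) * exA p j n k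

noncomputable def exG (p : ℝ) (i j : Fin 2) (n : ℕ) (x : ℤ) : ℂ :=
  (1 / (2 * (Real.pi : ℂ))) *
    ∫ k in (-Real.pi)..Real.pi, Complex.exp (Complex.I * k * x) * (exM p k ^ n) i j

lemma exM_cont (p : ℝ) (n : ℕ) : Continuous fun k : ℝ => exM p k ^ n := by
  apply Continuous.pow
  apply continuous_matrix
  intro i j
  fin_cases i <;> fin_cases j <;> simp [exM] <;>
    exact Continuous.mul (by continuity) continuous_const

lemma cont_entry (p : ℝ) (n : ℕ) (i j : Fin 2) :
    Continuous fun k : ℝ => (exM p k ^ n) i j :=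
  (exM_cont p n).matrix_elem i j

lemma cont_integrand (p : ℝ) (n : ℕ) (i j : Fin 2) (c : ℂ) :
    Continuous fun k : ℝ => Complex.exp (Complex.I * k * c) * (exM p k ^ n) i j := by
  exact (Complex.continuous_exp.comp (by continuity)).mul (cont_entry p n i j)

lemma exA_eq (p : ℝ) (j : Fin 2) (n : ℕ) (k : ℝ) :
    exA p j n k = (exM p k ^ n) j 0 + (exM p k ^ n) j 1 := by
  simp [exA, Matrix.mulVec, dotProduct, Fin.sum_univ_two]

lemma cont_integrandA (p : ℝ) (n : ℕ) (j : Fin 2) (c : ℂ) :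
    Continuous fun k : ℝ => Complex.exp (Complex.I * k * c) * exA p j n k := by
  simp only [exA_eq]
  exact (Complex.continuous_exp.comp (by continuity)).mul
    ((cont_entry p n j 0).add (cont_entry p n j 1))

lemma exp_shift_add (k : ℝ) (x : ℤ) :
    Complex.exp (Complex.I * k * ((x : ℤ) + 1 : ℤ)) =
      Complex.exp (Complex.I * k * x) * Complex.exp (Complex.I * k) := by
  rw [← Complex.exp_add]; congr 1; push_cast; ring

lemma exp_shift_sub (k : ℝ) (x : ℤ) :
    Complex.exp (Complex.I * k * ((x : ℤ) - 1 : ℤ)) =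
      Complex.exp (Complex.I * k * x) * Complex.exp (-(Complex.I * k)) := by
  rw [← Complex.exp_add]; congr 1; push_cast; ring

lemma key_integral (x : ℤ) :
    (∫ k in (-Real.pi)..Real.pi, Complex.exp (Complex.I * k * x))
      = if x = 0 then (2 * Real.pi : ℂ) else 0 := by
  rcases eq_or_ne x 0 with h | h
  · simp [h, Complex.exp_zero]
    ring
  · have hx : (Complex.I * x) ≠ 0 := by
      simp [Complex.I_ne_zero, Complex.ext_iff]
      exact_mod_cast h
    have h1 : ∀ k : ℝ, Complex.I * k * x = (Complex.I * x) * k := by intro k; ring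
    simp only [h1]
    rw [integral_exp_mul_complex hx]
    have e1 : Complex.I * x * Real.pi = x * (Real.pi * Complex.I) := by ring
    have e2 : Complex.I * x * ((-Real.pi : ℝ) : ℂ) = ((-x : ℤ) : ℂ) * (Real.pi * Complex.I) := by
      push_cast; ring
    rw [e1, e2, Complex.exp_int_mul, Complex.exp_int_mul, Complex.exp_pi_mul_I, if_neg h]
    have : ((-1 : ℂ)) ^ (-x) = (-1 : ℂ) ^ x := by
      rw [_root_.zpow_neg, ← _root_.inv_zpow, inv_neg, inv_one]
    rw [this, sub_self, zero_div]

lemma two_pi_ne : (2 * (Real.pi : ℂ)) ≠ 0 := by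
  simp [Real.pi_ne_zero, Complex.ext_iff]

lemma exG_zero (p : ℝ) (i j : Fin 2) (x : ℤ) :
    exG p i j 0 x = if x = 0 then (if i = j then 1 else 0) else 0 := by
  unfold exG
  simp only [pow_zero, Matrix.one_apply]
  rcases eq_or_ne i j with hij | hij
  · subst hij
    simp only [eq_self_iff_true, if_true, mul_one, key_integral]
    rcases eq_or_ne x 0 with h | h
    · rw [if_pos h, if_pos h, div_mul_eq_mul_div, one_mul, div_self two_pi_ne]
    · rw [if_neg h, if_neg h, mul_zero]
  · simp [if_neg hij]

lemma exP_eq_sum (p : ℝ) (j : Fin 2) (n : ℕ) (x : ℤ) :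
    exP p j n x = exG p j 0 n x + exG p j 1 n x := by
  unfold exP exG
  rw [← mul_add, ← intervalIntegral.integral_add
    ((cont_integrand p n j 0 x).intervalIntegrable _ _)
    ((cont_integrand p n j 1 x).intervalIntegrable _ _)]
  congr 1
  apply intervalIntegral.integral_congr
  intro k _
  simp only [exA_eq]; ring

lemma exG_succ (p : ℝ) (i : Fin 2) (n : ℕ) (x : ℤ) :
    exG p i 0 (n + 1) x = (p : ℂ) * exG p i 0 n (x + 1) + ((1 : ℂ) - p) * exG p i 1 n (x - 1) ∧
    exG p i 1 (n + 1) x = ((1 : ℂ) - p) * exG p i 0 n (x + 1) + (p : ℂ) * exG p i 1 n (x - 1) := by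
  have key : ∀ c d : ℂ, ∀ j : Fin 2,
      (∀ k : ℝ, Complex.exp (Complex.I * k * x) * (exM p k ^ (n+1)) i j
        = c * (Complex.exp (Complex.I * k * ((x + 1 : ℤ) : ℂ)) * (exM p k ^ n) i 0)
          + d * (Complex.exp (Complex.I * k * ((x - 1 : ℤ) : ℂ)) * (exM p k ^ n) i 1)) →
      exG p i j (n+1) x = c * exG p i 0 n (x + 1) + d * exG p i 1 n (x - 1) := by
    intro c d j hpt
    unfold exG
    have h1 : (∫ k in (-Real.pi)..Real.pi, Complex.exp (Complex.I * k * x) * (exM p k ^ (n+1)) i j)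
        = c * (∫ k in (-Real.pi)..Real.pi,
              Complex.exp (Complex.I * k * ((x + 1 : ℤ) : ℂ)) * (exM p k ^ n) i 0)
          + d * (∫ k in (-Real.pi)..Real.pi,
              Complex.exp (Complex.I * k * ((x - 1 : ℤ) : ℂ)) * (exM p k ^ n) i 1) := by
      rw [← intervalIntegral.integral_const_mul, ← intervalIntegral.integral_const_mul,
        ← intervalIntegral.integral_add
          (((cont_integrand p n i 0 ((x+1 : ℤ) : ℂ)).intervalIntegrable _ _).const_mul c)
          (((cont_integrand p n i 1 ((x-1 : ℤ) : ℂ)).intervalIntegrable _ _).const_mul d)]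
      apply intervalIntegral.integral_congr
      intro k _
      exact hpt k
    rw [h1]; ring
  constructor <;>
  · apply key
    intro k
    simp only [exp_shift_add, exp_shift_sub, pow_succ, Matrix.mul_apply, Fin.sum_univ_two]
    simp only [exM, Matrix.cons_val', Matrix.cons_val_zero, Matrix.cons_val_one,
      Matrix.head_cons, Matrix.head_fin_const, Matrix.empty_val', Matrix.cons_val_fin_one,
      Matrix.of_apply]
    ring

lemma exA_succ (p : ℝ) (n : ℕ) (k : ℝ) :
    exA p 0 (n + 1) k = Complex.exp (Complex.I * k) * ((p : ℂ) * exA p 0 n k + ((1:ℂ) - p) * exA p 1 n k) ∧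
    exA p 1 (n + 1) k = Complex.exp (-(Complex.I * k)) * (((1:ℂ) - p) * exA p 0 n k + (p : ℂ) * exA p 1 n k) := by
  constructor <;>
  · unfold exA
    rw [pow_succ', ← Matrix.mulVec_mulVec]
    simp only [Matrix.mulVec, dotProduct, Fin.sum_univ_two, exM, Matrix.cons_val',
      Matrix.cons_val_zero, Matrix.cons_val_one, Matrix.head_cons, Matrix.head_fin_const,
      Matrix.empty_val', Matrix.cons_val_fin_one, Matrix.of_apply]
    ring

lemma exP_succ (p : ℝ) (n : ℕ) (x : ℤ) :
    exP p 0 (n + 1) x = (p : ℂ) * exP p 0 n (x + 1) + ((1 : ℂ) - p) * exP p 1 n (x + 1) ∧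
    exP p 1 (n + 1) x = ((1 : ℂ) - p) * exP p 0 n (x - 1) + (p : ℂ) * exP p 1 n (x - 1) := by
  have key : ∀ (c d : ℂ) (j : Fin 2) (y : ℤ),
      (∀ k : ℝ, Complex.exp (Complex.I * k * x) * exA p j (n+1) k
        = c * (Complex.exp (Complex.I * k * ((y : ℤ) : ℂ)) * exA p 0 n k)
          + d * (Complex.exp (Complex.I * k * ((y : ℤ) : ℂ)) * exA p 1 n k)) →
      exP p j (n+1) x = c * exP p 0 n y + d * exP p 1 n y := by
    intro c d j y hpt
    unfold exP
    have h1 : (∫ k in (-Real.pi)..Real.pi, Complex.exp (Complex.I * k * x) * exA p j (n+1) k)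
        = c * (∫ k in (-Real.pi)..Real.pi,
              Complex.exp (Complex.I * k * ((y : ℤ) : ℂ)) * exA p 0 n k)
          + d * (∫ k in (-Real.pi)..Real.pi,
              Complex.exp (Complex.I * k * ((y : ℤ) : ℂ)) * exA p 1 n k) := by
      rw [← intervalIntegral.integral_const_mul, ← intervalIntegral.integral_const_mul,
        ← intervalIntegral.integral_add
          (((cont_integrandA p n 0 ((y : ℤ) : ℂ)).intervalIntegrable _ _).const_mul c)
          (((cont_integrandA p n 1 ((y : ℤ) : ℂ)).intervalIntegrable _ _).const_mul d)]
      apply intervalIntegral.integral_congr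
      intro k _
      exact hpt k
    rw [h1]; ring
  constructor
  · apply key
    intro k
    rw [(exA_succ p n k).1, exp_shift_add]
    ring
  · apply key
    intro k
    rw [(exA_succ p n k).2, exp_shift_sub]
    ring

lemma sandwich_entries (b11 b21 c12 c22 : ℂ) (S T : Matrix (Fin 2) (Fin 2) ℂ) :
    (!![b11,0;b21,0] * S * (!![b11,0;b21,0])ᴴ + !![0,c12;0,c22] * T * (!![0,c12;0,c22])ᴴ) 0 0
      = b11 * (starRingEnd ℂ) b11 * S 0 0 + c12 * (starRingEnd ℂ) c12 * T 1 1 ∧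
    (!![b11,0;b21,0] * S * (!![b11,0;b21,0])ᴴ + !![0,c12;0,c22] * T * (!![0,c12;0,c22])ᴴ) 1 1
      = b21 * (starRingEnd ℂ) b21 * S 0 0 + c22 * (starRingEnd ℂ) c22 * T 1 1 := by
  constructor <;>
  · simp only [Matrix.add_apply, Matrix.mul_apply, Matrix.conjTranspose_apply,
      Fin.sum_univ_two, Matrix.cons_val', Matrix.cons_val_zero, Matrix.cons_val_one,
      Matrix.head_cons, Matrix.head_fin_const, Matrix.empty_val', Matrix.cons_val_fin_one,
      Matrix.of_apply, star_zero, RCLike.star_def, map_zero, mul_zero, zero_mul, add_zero, zero_add]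
    ring

/-- Example 2: the OQRW generated by `B = [[b₁₁,0],[b₂₁,0]]`, `C = [[0,c₁₂],[0,c₂₂]]`
(with `B+C` unitary, `p = |b₁₁|² = 1-|b₂₁|² = |c₂₂|² = 1-|c₁₂|²`) is a correlated
random walk: the `p_j^{(n)}` satisfy the correlated random walk recurrences, and
`p_x^{(n)} = a p₁^{(n)}(x) + b p₂^{(n)}(x)` for an initial density matrix with
diagonal entries `a, b`. -/
theorem oqrw_example2_correlated (b11 b21 c12 c22 : ℂ) (p : ℝ)
    (hU : !![b11, 0; b21, 0] + !![0, c12; 0, c22] ∈ unitary (Matrix (Fin 2) (Fin 2) ℂ))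
    (hb11 : ‖b11‖ ^ 2 = p) (hb21 : ‖b21‖ ^ 2 = 1 - p)
    (hc22 : ‖c22‖ ^ 2 = p) (hc12 : ‖c12‖ ^ 2 = 1 - p)
    (a b : ℝ) (ha : 0 ≤ a) (hb : 0 ≤ b) (hab : a + b = 1)
    (ρ₀ : Matrix (Fin 2) (Fin 2) ℂ) (hpos : ρ₀.PosSemidef)
    (h00 : ρ₀ 0 0 = (a : ℂ)) (h11 : ρ₀ 1 1 = (b : ℂ)) :
    (∀ (n : ℕ) (x : ℤ),
        exP p 0 (n + 1) x = (p : ℂ) * exP p 0 n (x + 1) + ((1 : ℂ) - p) * exP p 1 n (x + 1) ∧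
        exP p 1 (n + 1) x = ((1 : ℂ) - p) * exP p 0 n (x - 1) + (p : ℂ) * exP p 1 n (x - 1)) ∧
      ∀ (n : ℕ) (x : ℤ),
        (oqrwState !![b11, 0; b21, 0] !![0, c12; 0, c22] ρ₀ n x).trace =
          (a : ℂ) * exP p 0 n x + (b : ℂ) * exP p 1 n x := by
  have hpB : b11 * (starRingEnd ℂ) b11 = (p : ℂ) := by
    have h : Complex.normSq b11 = p := by rw [← Complex.sq_norm]; exact hb11
    rw [Complex.mul_conj, h]
  have hpB' : b21 * (starRingEnd ℂ) b21 = (1 : ℂ) - p := by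
    have h : Complex.normSq b21 = 1 - p := by rw [← Complex.sq_norm]; exact hb21
    rw [Complex.mul_conj, h]; push_cast; ring
  have hpC : c22 * (starRingEnd ℂ) c22 = (p : ℂ) := by
    have h : Complex.normSq c22 = p := by rw [← Complex.sq_norm]; exact hc22
    rw [Complex.mul_conj, h]
  have hpC' : c12 * (starRingEnd ℂ) c12 = (1 : ℂ) - p := by
    have h : Complex.normSq c12 = 1 - p := by rw [← Complex.sq_norm]; exact hc12
    rw [Complex.mul_conj, h]; push_cast; ring
  have main : ∀ (n : ℕ) (x : ℤ),
      (oqrwState !![b11, 0; b21, 0] !![0, c12; 0, c22] ρ₀ n x) 0 0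
        = (a : ℂ) * exG p 0 0 n x + (b : ℂ) * exG p 1 0 n x ∧
      (oqrwState !![b11, 0; b21, 0] !![0, c12; 0, c22] ρ₀ n x) 1 1
        = (a : ℂ) * exG p 0 1 n x + (b : ℂ) * exG p 1 1 n x := by
    intro n
    induction n with
    | zero =>
      intro x
      constructor <;>
      · show (if x = 0 then ρ₀ else 0) _ _ = _
        simp only [exG_zero]
        rcases eq_or_ne x 0 with h | h
        · subst h
          simp only [if_pos rfl]
          norm_num [h00, h11]
        · simp [h]
    | succ n ih =>
      intro x
      constructor
      · show (!![b11, 0; b21, 0] * oqrwState _ _ _ n (x+1) * (!![b11, 0; b21, 0])ᴴ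
            + !![0, c12; 0, c22] * oqrwState _ _ _ n (x-1) * (!![0, c12; 0, c22])ᴴ) 0 0 = _
        rw [(sandwich_entries b11 b21 c12 c22 _ _).1, hpB, hpC', (ih (x+1)).1, (ih (x-1)).2,
          (exG_succ p 0 n x).1, (exG_succ p 1 n x).1]
        ring
      · show (!![b11, 0; b21, 0] * oqrwState _ _ _ n (x+1) * (!![b11, 0; b21, 0])ᴴ
            + !![0, c12; 0, c22] * oqrwState _ _ _ n (x-1) * (!![0, c12; 0, c22])ᴴ) 1 1 = _
        rw [(sandwich_entries b11 b21 c12 c22 _ _).2, hpB', hpC, (ih (x+1)).1, (ih (x-1)).2,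
          (exG_succ p 0 n x).2, (exG_succ p 1 n x).2]
        ring
  refine ⟨fun n x => exP_succ p n x, fun n x => ?_⟩
  rw [Matrix.trace_fin_two, (main n x).1, (main n x).2, exP_eq_sum, exP_eq_sum]
  ring
end

section
/- Let p + q = 1 with p, q ∈ [0,1] and let 0 < γ ≤ min{√(2p), √(2q)}. Consider the OQRW on ℤ generated by B = [[1,0],[0,√(p−γ²/2)]] and C = [[0,γ],[0,√(q−γ²/2)]], with initial density matrix ρ₀ = [[a,0],[0,b]] (a + b = 1, a, b ≥ 0). Set p̃ = p − γ²/2 and q̃ = q − γ²/2. Then for all n ≥ 1 and x ∈ ℤ: p_x^{(n)} = a·δ_{x,−n} + b·γ²·Σ_{j=0}^{n−1} Σ_{l=0}^{j} C(j,l) p̃^l q̃^{j−l} δ_{x, 2(j−l+1)−n} + b·Σ_{j=0}^{n} C(n,j) p̃^j q̃^{n−j} δ_{x, n−2j}, where δ is the Kronecker delta and C(·,·) the binomial coefficient. -/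
open MeasureTheory Filter Matrix Finset
open scoped ComplexOrder

lemma oqrw_step00 (s g t : ℝ) (M N : Matrix (Fin 2) (Fin 2) ℂ) :
    (!![(1:ℂ),0;0,(s:ℂ)] * M * !![(1:ℂ),0;0,(s:ℂ)]ᴴ
      + !![(0:ℂ),(g:ℂ);0,(t:ℂ)] * N * !![(0:ℂ),(g:ℂ);0,(t:ℂ)]ᴴ) 0 0
      = M 0 0 + (g:ℂ)^2 * N 1 1 := by
  simp [Matrix.mul_apply, Fin.sum_univ_two, Matrix.conjTranspose_apply, Matrix.vecMul,
    dotProduct, Complex.conj_ofReal]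
  ring

lemma oqrw_step11 (s g t : ℝ) (M N : Matrix (Fin 2) (Fin 2) ℂ) :
    (!![(1:ℂ),0;0,(s:ℂ)] * M * !![(1:ℂ),0;0,(s:ℂ)]ᴴ
      + !![(0:ℂ),(g:ℂ);0,(t:ℂ)] * N * !![(0:ℂ),(g:ℂ);0,(t:ℂ)]ᴴ) 1 1
      = (s:ℂ)^2 * M 1 1 + (t:ℂ)^2 * N 1 1 := by
  simp [Matrix.mul_apply, Fin.sum_univ_two, Matrix.conjTranspose_apply, Matrix.vecMul,
    dotProduct, Complex.conj_ofReal]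
  ring

noncomputable def Wsum (pt qt : ℂ) (n : ℕ) (x : ℤ) : ℂ :=
  ∑ j ∈ Finset.range (n+1),
    (n.choose j : ℂ) * pt ^ j * qt ^ (n - j) * (if x = (n : ℤ) - 2 * j then 1 else 0)

noncomputable def Dsum (pt qt : ℂ) (n : ℕ) (x : ℤ) : ℂ :=
  ∑ j ∈ Finset.range n, ∑ l ∈ Finset.range (j + 1),
    (j.choose l : ℂ) * pt ^ l * qt ^ (j - l) *
      (if x = 2 * ((j : ℤ) - l + 1) - n then 1 else 0)

lemma Wsum_succ (pt qt : ℂ) (n : ℕ) (x : ℤ) :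
    Wsum pt qt (n+1) x = pt * Wsum pt qt n (x+1) + qt * Wsum pt qt n (x-1) := by
  unfold Wsum
  rw [Finset.sum_range_succ', Finset.mul_sum, Finset.mul_sum]
  have key : ∀ j ∈ Finset.range (n+1),
      ((n+1).choose (j+1) : ℂ) * pt ^ (j+1) * qt ^ (n + 1 - (j+1)) *
        (if x = ((n+1 : ℕ) : ℤ) - 2 * ((j+1 : ℕ) : ℤ) then 1 else 0)
      = pt * ((n.choose j : ℂ) * pt ^ j * qt ^ (n - j) *
            (if x + 1 = (n : ℤ) - 2 * j then 1 else 0))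
        + (n.choose (j+1) : ℂ) * pt ^ (j+1) * qt ^ (n + 1 - (j+1)) *
            (if x = ((n+1 : ℕ) : ℤ) - 2 * ((j+1 : ℕ) : ℤ) then 1 else 0) := by
    intro j hj
    rw [Nat.choose_succ_succ]
    have h1 : (if x = ((n+1 : ℕ) : ℤ) - 2 * ((j+1 : ℕ) : ℤ) then (1:ℂ) else 0)
        = (if x + 1 = (n : ℤ) - 2 * j then 1 else 0) := by
      refine if_congr ?_ rfl rfl
      push_cast
      omega
    have h2 : n + 1 - (j + 1) = n - j := by omega
    rw [h1, h2]
    push_cast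
    ring
  rw [Finset.sum_congr rfl key, Finset.sum_add_distrib]
  rw [add_assoc]
  congr 1
  rw [show (((n+1).choose 0 : ℕ) : ℂ) = ((n.choose 0 : ℕ) : ℂ) by simp]
  have h3 : (∑ j ∈ Finset.range (n+1), ((n.choose (j+1) : ℂ) * pt ^ (j+1) * qt ^ (n + 1 - (j+1)) *
        (if x = ((n+1:ℕ):ℤ) - 2 * ((j+1:ℕ):ℤ) then 1 else 0)))
      + ((n.choose 0 : ℂ) * pt ^ 0 * qt ^ (n + 1 - 0) *
        (if x = ((n+1:ℕ):ℤ) - 2 * ((0:ℕ):ℤ) then 1 else 0))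
      = ∑ j ∈ Finset.range (n+1+1), ((n.choose j : ℂ) * pt ^ j * qt ^ (n + 1 - j) *
        (if x = ((n+1:ℕ):ℤ) - 2 * ((j:ℕ):ℤ) then 1 else 0)) :=
    (Finset.sum_range_succ' (fun j => (n.choose j : ℂ) * pt ^ j * qt ^ (n + 1 - j) *
      (if x = ((n+1:ℕ):ℤ) - 2 * ((j:ℕ):ℤ) then 1 else 0)) (n+1)).symm
  rw [h3, Finset.sum_range_succ]
  have hz : ((n.choose (n+1) : ℂ)) = 0 := by
    rw [Nat.choose_eq_zero_of_lt (by omega)]; simp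
  rw [hz]
  simp only [zero_mul, add_zero]
  refine Finset.sum_congr rfl ?_
  intro j hj
  have hj' : j ≤ n := by simpa [Nat.lt_succ_iff] using Finset.mem_range.mp hj
  have h1 : (if x = ((n+1 : ℕ) : ℤ) - 2 * (j : ℕ) then (1:ℂ) else 0)
      = (if x - 1 = (n : ℤ) - 2 * j then 1 else 0) := by
    refine if_congr ?_ rfl rfl
    push_cast
    omega
  have h2 : n + 1 - j = (n - j) + 1 := by omega
  rw [h1, h2]
  ring

lemma Dsum_succ (pt qt : ℂ) (n : ℕ) (x : ℤ) :
    Dsum pt qt (n+1) x = Dsum pt qt n (x+1) + Wsum pt qt n (x-1) := by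
  unfold Dsum Wsum
  rw [Finset.sum_range_succ]
  congr 1
  · refine Finset.sum_congr rfl fun j hj => Finset.sum_congr rfl fun l hl => ?_
    rw [show (if x = 2*((j:ℤ)-(l:ℤ)+1) - ((n+1:ℕ):ℤ) then (1:ℂ) else 0)
        = (if x+1 = 2*((j:ℤ)-(l:ℤ)+1) - (n:ℤ) then (1:ℂ) else 0)
      from if_congr (by push_cast; omega) rfl rfl]
  · refine Finset.sum_congr rfl fun l hl => ?_
    rw [show (if x = 2*((n:ℤ)-(l:ℤ)+1) - ((n+1:ℕ):ℤ) then (1:ℂ) else 0)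
        = (if x-1 = (n:ℤ) - 2*(l:ℤ) then (1:ℂ) else 0)
      from if_congr (by push_cast; omega) rfl rfl]

/-- Example 3: the distribution of the OQRW generated by
`B = [[1,0],[0,√(p-γ²/2)]]`, `C = [[0,γ],[0,√(q-γ²/2)]]`, started at
`ρ₀ = [[a,0],[0,b]]`, is
`p_x^{(n)} = a δ_{x,-n} + b γ² Σ_{j=0}^{n-1} Σ_{l=0}^{j} C(j,l) p̃^l q̃^{j-l} δ_{x,2(j-l+1)-n}`
`+ b Σ_{j=0}^{n} C(n,j) p̃^j q̃^{n-j} δ_{x,n-2j}`. -/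
theorem oqrw_example3_distribution (p q γ a b : ℝ)
    (hpq : p + q = 1) (hp : p ∈ Set.Icc (0:ℝ) 1) (hq : q ∈ Set.Icc (0:ℝ) 1)
    (hγ : 0 < γ) (hγ' : γ ≤ min (Real.sqrt (2 * p)) (Real.sqrt (2 * q)))
    (ha : 0 ≤ a) (hb : 0 ≤ b) (hab : a + b = 1)
    (n : ℕ) (hn : 1 ≤ n) (x : ℤ) :
    (oqrwState !![(1 : ℂ), 0; 0, (Real.sqrt (p - γ ^ 2 / 2) : ℂ)]
        !![(0 : ℂ), (γ : ℂ); 0, (Real.sqrt (q - γ ^ 2 / 2) : ℂ)]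
        !![(a : ℂ), 0; 0, (b : ℂ)] n x).trace =
      (a : ℂ) * (if x = -(n : ℤ) then 1 else 0) +
        (b : ℂ) * (γ : ℂ) ^ 2 * ∑ j ∈ Finset.range n, ∑ l ∈ Finset.range (j + 1),
          (j.choose l : ℂ) * ((p - γ ^ 2 / 2 : ℝ) : ℂ) ^ l *
            ((q - γ ^ 2 / 2 : ℝ) : ℂ) ^ (j - l) *
            (if x = 2 * ((j : ℤ) - l + 1) - n then 1 else 0) +
        (b : ℂ) * ∑ j ∈ Finset.range (n + 1),
          (n.choose j : ℂ) * ((p - γ ^ 2 / 2 : ℝ) : ℂ) ^ j *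
            ((q - γ ^ 2 / 2 : ℝ) : ℂ) ^ (n - j) *
            (if x = (n : ℤ) - 2 * j then 1 else 0) := by
  obtain ⟨hp0, hp1⟩ := hp
  obtain ⟨hq0, hq1⟩ := hq
  have hγp : γ ≤ Real.sqrt (2*p) := le_trans hγ' (min_le_left _ _)
  have hγq : γ ≤ Real.sqrt (2*q) := le_trans hγ' (min_le_right _ _)
  have hpt : 0 ≤ p - γ^2/2 := by
    have h1 : γ^2 ≤ Real.sqrt (2*p)^2 := pow_le_pow_left₀ hγ.le hγp 2
    rw [Real.sq_sqrt (by linarith)] at h1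
    linarith
  have hqt : 0 ≤ q - γ^2/2 := by
    have h1 : γ^2 ≤ Real.sqrt (2*q)^2 := pow_le_pow_left₀ hγ.le hγq 2
    rw [Real.sq_sqrt (by linarith)] at h1
    linarith
  have hs2 : ((Real.sqrt (p - γ^2/2) : ℝ) : ℂ)^2 = ((p - γ^2/2 : ℝ) : ℂ) := by
    rw [← Complex.ofReal_pow, Real.sq_sqrt hpt]
  have ht2 : ((Real.sqrt (q - γ^2/2) : ℝ) : ℂ)^2 = ((q - γ^2/2 : ℝ) : ℂ) := by
    rw [← Complex.ofReal_pow, Real.sq_sqrt hqt]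
  set pt : ℂ := ((p - γ^2/2 : ℝ) : ℂ) with hptdef
  set qt : ℂ := ((q - γ^2/2 : ℝ) : ℂ) with hqtdef
  have key : ∀ m : ℕ, ∀ y : ℤ,
      (oqrwState !![(1 : ℂ), 0; 0, (Real.sqrt (p - γ ^ 2 / 2) : ℂ)]
          !![(0 : ℂ), (γ : ℂ); 0, (Real.sqrt (q - γ ^ 2 / 2) : ℂ)]
          !![(a : ℂ), 0; 0, (b : ℂ)] m y) 0 0
        = (a:ℂ) * (if y = -(m:ℤ) then 1 else 0) + (b:ℂ) * (γ:ℂ)^2 * Dsum pt qt m y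
      ∧ (oqrwState !![(1 : ℂ), 0; 0, (Real.sqrt (p - γ ^ 2 / 2) : ℂ)]
          !![(0 : ℂ), (γ : ℂ); 0, (Real.sqrt (q - γ ^ 2 / 2) : ℂ)]
          !![(a : ℂ), 0; 0, (b : ℂ)] m y) 1 1
        = (b:ℂ) * Wsum pt qt m y := by
    intro m
    induction m with
    | zero =>
      intro y
      constructor
      · by_cases hy : y = 0 <;>
          simp [oqrwState, hy, Dsum]
      · by_cases hy : y = 0 <;>
          simp [oqrwState, hy, Wsum]
    | succ m ih =>
      intro y
      simp only [oqrwState]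
      constructor
      · rw [oqrw_step00, (ih (y+1)).1, (ih (y-1)).2, Dsum_succ]
        rw [show (if y+1 = -(m:ℤ) then (1:ℂ) else 0)
            = (if y = -((m+1:ℕ):ℤ) then (1:ℂ) else 0)
          from if_congr (by push_cast; omega) rfl rfl]
        ring
      · rw [oqrw_step11, (ih (y+1)).2, (ih (y-1)).2, hs2, ht2, Wsum_succ]
        ring
  rw [Matrix.trace_fin_two, (key n x).1, (key n x).2]
  unfold Dsum Wsum
  ring
end

section
/- Let p + q = 1 with p, q ∈ (0,1) and let 0 < γ ≤ min{√(2p), √(2q)}. Consider the OQRW on ℤ generated by B = [[1,0],[0,√(p−γ²/2)]] and C = [[0,γ],[0,√(q−γ²/2)]], with initial density matrix ρ₀ = [[a,0],[0,b]] (a + b = 1, a, b ≥ 0). Let μ_n be the probability measure on ℝ assigning mass p_x^{(n)} to x/n. Then μ_n converges weakly, as n → ∞, to the Dirac measure δ_{−1}. -/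
open MeasureTheory Filter Matrix
open scoped ComplexOrder

noncomputable def Bfun (s2 t2 b : ℝ) : ℕ → ℤ → ℝ
  | 0, x => if x = 0 then b else 0
  | n+1, x => s2 * Bfun s2 t2 b n (x+1) + t2 * Bfun s2 t2 b n (x-1)

noncomputable def Afun (γ2 s2 t2 a b : ℝ) : ℕ → ℤ → ℝ
  | 0, x => if x = 0 then a else 0
  | n+1, x => Afun γ2 s2 t2 a b n (x+1) + γ2 * Bfun s2 t2 b n (x-1)

variable {γ2 s2 t2 a b : ℝ}

lemma Bfun_support (s2 t2 b : ℝ) : ∀ (n : ℕ) (x : ℤ), (x < -(n:ℤ) ∨ (n:ℤ) < x) →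
    Bfun s2 t2 b n x = 0
  | 0, x, h => by
      have hx : x ≠ 0 := by push_cast at h; omega
      simp [Bfun, hx]
  | n+1, x, h => by
      have h1 : (x+1 < -(n:ℤ)) ∨ ((n:ℤ) < x+1) := by push_cast at h ⊢; omega
      have h2 : (x-1 < -(n:ℤ)) ∨ ((n:ℤ) < x-1) := by push_cast at h ⊢; omega
      simp [Bfun, Bfun_support s2 t2 b n _ h1, Bfun_support s2 t2 b n _ h2]

lemma Afun_support (γ2 s2 t2 a b : ℝ) : ∀ (n : ℕ) (x : ℤ), (x < -(n:ℤ) ∨ (n:ℤ) < x) →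
    Afun γ2 s2 t2 a b n x = 0
  | 0, x, h => by
      have hx : x ≠ 0 := by push_cast at h; omega
      simp [Afun, hx]
  | n+1, x, h => by
      have h1 : (x+1 < -(n:ℤ)) ∨ ((n:ℤ) < x+1) := by push_cast at h ⊢; omega
      have h2 : (x-1 < -(n:ℤ)) ∨ ((n:ℤ) < x-1) := by push_cast at h ⊢; omega
      simp [Afun, Afun_support γ2 s2 t2 a b n _ h1, Bfun_support s2 t2 b n _ h2]

lemma Bfun_nonneg (hs2 : 0 ≤ s2) (ht2 : 0 ≤ t2) (hb : 0 ≤ b) :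
    ∀ (n : ℕ) (x : ℤ), 0 ≤ Bfun s2 t2 b n x
  | 0, x => by dsimp [Bfun]; split <;> simp [hb]
  | n+1, x => by
      dsimp [Bfun]
      exact add_nonneg (mul_nonneg hs2 (Bfun_nonneg hs2 ht2 hb n _))
        (mul_nonneg ht2 (Bfun_nonneg hs2 ht2 hb n _))

lemma Afun_nonneg (hγ2 : 0 ≤ γ2) (hs2 : 0 ≤ s2) (ht2 : 0 ≤ t2) (ha : 0 ≤ a) (hb : 0 ≤ b) :
    ∀ (n : ℕ) (x : ℤ), 0 ≤ Afun γ2 s2 t2 a b n x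
  | 0, x => by dsimp [Afun]; split <;> simp [ha]
  | n+1, x => by
      dsimp [Afun]
      exact add_nonneg (Afun_nonneg hγ2 hs2 ht2 ha hb n _)
        (mul_nonneg hγ2 (Bfun_nonneg hs2 ht2 hb n _))

lemma summable_support {F : ℤ → ℝ} (n : ℕ)
    (h : ∀ x : ℤ, (x < -(n:ℤ) ∨ (n:ℤ) < x) → F x = 0) : Summable F :=
  summable_of_ne_finset_zero (s := Finset.Icc (-(n:ℤ)) (n:ℤ))
    (fun x hx => h x (by rw [Finset.mem_Icc] at hx; omega))

lemma summable_B (n : ℕ) : Summable (Bfun s2 t2 b n) :=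
  summable_support n (Bfun_support s2 t2 b n)

lemma summable_A (n : ℕ) : Summable (Afun γ2 s2 t2 a b n) :=
  summable_support n (Afun_support γ2 s2 t2 a b n)

lemma tsum_shift (F : ℤ → ℝ) (c : ℤ) : ∑' x : ℤ, F (x + c) = ∑' x : ℤ, F x :=
  (Equiv.addRight c).tsum_eq F

lemma tsum_shift' (F : ℤ → ℝ) (c : ℤ) : ∑' x : ℤ, F (x - c) = ∑' x : ℤ, F x :=
  (Equiv.subRight c).tsum_eq F

lemma summable_shift {F : ℤ → ℝ} (c : ℤ) (h : Summable F) : Summable fun x : ℤ => F (x + c) :=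
  (Equiv.addRight c).summable_iff.2 h

lemma summable_shift' {F : ℤ → ℝ} (c : ℤ) (h : Summable F) : Summable fun x : ℤ => F (x - c) :=
  (Equiv.subRight c).summable_iff.2 h

lemma tsum_Bfun (n : ℕ) : ∑' x : ℤ, Bfun s2 t2 b n x = (s2+t2)^n * b := by
  induction n with
  | zero => simp [Bfun]
  | succ n ih =>
    have h1 : Summable fun x : ℤ => Bfun s2 t2 b n (x+1) := summable_shift 1 (summable_B n)
    have h2 : Summable fun x : ℤ => Bfun s2 t2 b n (x-1) := summable_shift' 1 (summable_B n)
    calc ∑' x : ℤ, Bfun s2 t2 b (n+1) x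
        = ∑' x : ℤ, (s2 * Bfun s2 t2 b n (x+1) + t2 * Bfun s2 t2 b n (x-1)) := by
          simp only [Bfun]
      _ = s2 * ∑' x : ℤ, Bfun s2 t2 b n (x+1) + t2 * ∑' x : ℤ, Bfun s2 t2 b n (x-1) := by
          rw [Summable.tsum_add (h1.mul_left s2) (h2.mul_left t2), tsum_mul_left, tsum_mul_left]
      _ = (s2+t2)^(n+1) * b := by
          rw [tsum_shift (Bfun s2 t2 b n) 1, tsum_shift' (Bfun s2 t2 b n) 1, ih]; ring

lemma tsum_Afun (hγr : γ2 = 1 - (s2+t2)) (n : ℕ) :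
    ∑' x : ℤ, Afun γ2 s2 t2 a b n x = a + b * (1 - (s2+t2)^n) := by
  induction n with
  | zero => simp [Afun]
  | succ n ih =>
    have h1 : Summable fun x : ℤ => Afun γ2 s2 t2 a b n (x+1) :=
      summable_shift 1 (summable_A n)
    have h2 : Summable fun x : ℤ => Bfun s2 t2 b n (x-1) := summable_shift' 1 (summable_B n)
    calc ∑' x : ℤ, Afun γ2 s2 t2 a b (n+1) x
        = ∑' x : ℤ, (Afun γ2 s2 t2 a b n (x+1) + γ2 * Bfun s2 t2 b n (x-1)) := by
          simp only [Afun]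
      _ = ∑' x : ℤ, Afun γ2 s2 t2 a b n (x+1) + γ2 * ∑' x : ℤ, Bfun s2 t2 b n (x-1) := by
          rw [Summable.tsum_add h1 (h2.mul_left γ2), tsum_mul_left]
      _ = a + b * (1 - (s2+t2)^(n+1)) := by
          rw [tsum_shift (Afun γ2 s2 t2 a b n) 1, tsum_shift' (Bfun s2 t2 b n) 1, ih,
            tsum_Bfun, hγr]; ring

noncomputable def tailA (γ2 s2 t2 a b : ℝ) (n : ℕ) (j : ℤ) : ℝ :=
  ∑' x : ℤ, if j ≤ x then Afun γ2 s2 t2 a b n x else 0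

noncomputable def tailB (s2 t2 b : ℝ) (n : ℕ) (j : ℤ) : ℝ :=
  ∑' x : ℤ, if j ≤ x then Bfun s2 t2 b n x else 0

lemma summable_tailA (n : ℕ) (j : ℤ) :
    Summable fun x : ℤ => if j ≤ x then Afun γ2 s2 t2 a b n x else 0 :=
  summable_support n (fun x hx => by simp [Afun_support γ2 s2 t2 a b n x hx])

lemma summable_tailB (n : ℕ) (j : ℤ) :
    Summable fun x : ℤ => if j ≤ x then Bfun s2 t2 b n x else 0 :=
  summable_support n (fun x hx => by simp [Bfun_support s2 t2 b n x hx])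

lemma tailB_le (hs2 : 0 ≤ s2) (ht2 : 0 ≤ t2) (hb : 0 ≤ b) (n : ℕ) (j : ℤ) :
    tailB s2 t2 b n j ≤ (s2+t2)^n * b := by
  rw [← tsum_Bfun n]
  refine Summable.tsum_le_tsum (fun x => ?_) (summable_tailB n j) (summable_B n)
  split
  · exact le_rfl
  · exact Bfun_nonneg hs2 ht2 hb n x

lemma tailB_nonneg (hs2 : 0 ≤ s2) (ht2 : 0 ≤ t2) (hb : 0 ≤ b) (n : ℕ) (j : ℤ) :
    0 ≤ tailB s2 t2 b n j := by
  rw [tailB]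
  refine tsum_nonneg fun x => ?_
  split
  · exact Bfun_nonneg hs2 ht2 hb n x
  · exact le_rfl

lemma tailA_nonneg (hγ2 : 0 ≤ γ2) (hs2 : 0 ≤ s2) (ht2 : 0 ≤ t2) (ha : 0 ≤ a) (hb : 0 ≤ b)
    (n : ℕ) (j : ℤ) : 0 ≤ tailA γ2 s2 t2 a b n j := by
  rw [tailA]
  refine tsum_nonneg fun x => ?_
  split
  · exact Afun_nonneg hγ2 hs2 ht2 ha hb n x
  · exact le_rfl

lemma tailB_eq_zero (n : ℕ) (j : ℤ) (h : (n:ℤ) < j) : tailB s2 t2 b n j = 0 := by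
  rw [tailB]
  have : ∀ x : ℤ, (if j ≤ x then Bfun s2 t2 b n x else 0) = 0 := by
    intro x
    split
    · exact Bfun_support s2 t2 b n x (Or.inr (by omega))
    · rfl
  rw [tsum_congr this, tsum_zero]

lemma tsum_ite_shift (F : ℤ → ℝ) (j : ℤ) :
    ∑' x : ℤ, (if j ≤ x then F (x+1) else 0) = ∑' x : ℤ, (if j+1 ≤ x then F x else 0) := by
  have h : ∀ x : ℤ, (if j ≤ x then F (x+1) else 0)
      = (fun y => if j+1 ≤ y then F y else 0) (x+1) := by
    intro x
    by_cases hx : j ≤ x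
    · simp only [if_pos hx, if_pos (by omega : j+1 ≤ x+1)]
    · simp only [if_neg hx, if_neg (by omega : ¬ j+1 ≤ x+1)]
  rw [tsum_congr h]
  exact tsum_shift (fun y => if j + 1 ≤ y then F y else 0) 1

lemma tsum_ite_shift' (F : ℤ → ℝ) (j : ℤ) :
    ∑' x : ℤ, (if j ≤ x then F (x-1) else 0) = ∑' x : ℤ, (if j-1 ≤ x then F x else 0) := by
  have h : ∀ x : ℤ, (if j ≤ x then F (x-1) else 0)
      = (fun y => if j-1 ≤ y then F y else 0) (x-1) := by
    intro x
    by_cases hx : j ≤ x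
    · simp only [if_pos hx, if_pos (by omega : j-1 ≤ x-1)]
    · simp only [if_neg hx, if_neg (by omega : ¬ j-1 ≤ x-1)]
  rw [tsum_congr h]
  exact tsum_shift' (fun y => if j - 1 ≤ y then F y else 0) 1

lemma tailA_succ (n : ℕ) (j : ℤ) :
    tailA γ2 s2 t2 a b (n+1) j = tailA γ2 s2 t2 a b n (j+1) + γ2 * tailB s2 t2 b n (j-1) := by
  rw [tailA, tailA, tailB]
  have h : ∀ x : ℤ, (if j ≤ x then Afun γ2 s2 t2 a b (n+1) x else 0)
      = (if j ≤ x then Afun γ2 s2 t2 a b n (x+1) else 0)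
        + γ2 * (if j ≤ x then Bfun s2 t2 b n (x-1) else 0) := by
    intro x
    by_cases hx : j ≤ x <;> simp [hx, Afun]
  rw [tsum_congr h, Summable.tsum_add ?h1 ?h2, tsum_mul_left, tsum_ite_shift, tsum_ite_shift']
  case h1 =>
    exact summable_support (n+1) (fun x hx => by
      rw [Afun_support γ2 s2 t2 a b n (x+1) (by push_cast at hx ⊢; omega)]; simp)
  case h2 =>
    exact (summable_support (n+1) (fun x hx => by
      rw [Bfun_support s2 t2 b n (x-1) (by push_cast at hx ⊢; omega)]; simp)).mul_left γ2

lemma tailA_zero (j : ℤ) (hj : 0 < j) : tailA γ2 s2 t2 a b 0 j = 0 := by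
  rw [tailA]
  have : ∀ x : ℤ, (if j ≤ x then Afun γ2 s2 t2 a b 0 x else 0) = 0 := by
    intro x
    split
    · exact Afun_support γ2 s2 t2 a b 0 x (Or.inr (by omega))
    · rfl
  rw [tsum_congr this, tsum_zero]

lemma tailA_bound (hγ2 : 0 ≤ γ2) (hs2 : 0 ≤ s2) (ht2 : 0 ≤ t2) (ha : 0 ≤ a) (hb : 0 ≤ b)
    (k : ℕ) : ∀ n : ℕ, tailA γ2 s2 t2 a b n (2*((k:ℤ)+1) - (n:ℤ))
      ≤ γ2 * b * ∑ m ∈ Finset.Ico k n, (s2+t2)^m := by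
  intro n
  induction n with
  | zero =>
    rw [tailA_zero _ (by push_cast; omega)]
    simp
  | succ n ih =>
    have hj : (2*((k:ℤ)+1) - ((n+1:ℕ):ℤ)) + 1 = 2*((k:ℤ)+1) - (n:ℤ) := by push_cast; ring
    have hj' : (2*((k:ℤ)+1) - ((n+1:ℕ):ℤ)) - 1 = 2*(k:ℤ) - (n:ℤ) := by push_cast; ring
    rw [tailA_succ, hj, hj']
    by_cases hk : k ≤ n
    · have hB : tailB s2 t2 b n (2*(k:ℤ) - (n:ℤ)) ≤ (s2+t2)^n * b := tailB_le hs2 ht2 hb n _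
      have hsum : ∑ m ∈ Finset.Ico k (n+1), (s2+t2)^m
          = ∑ m ∈ Finset.Ico k n, (s2+t2)^m + (s2+t2)^n := Finset.sum_Ico_succ_top hk _
      have := mul_le_mul_of_nonneg_left hB hγ2
      rw [hsum]
      nlinarith [ih]
    · have hB : tailB s2 t2 b n (2*(k:ℤ) - (n:ℤ)) = 0 :=
        tailB_eq_zero n _ (by omega)
      rw [hB, mul_zero, add_zero]
      refine ih.trans ?_
      refine mul_le_mul_of_nonneg_left ?_ (mul_nonneg hγ2 hb)
      refine Finset.sum_le_sum_of_subset_of_nonneg (Finset.Ico_subset_Ico le_rfl (by omega))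
        (fun m _ _ => pow_nonneg (by linarith) m)

lemma geom_aux (hγr : γ2 = 1 - (s2+t2)) (k : ℕ) :
    ∀ n : ℕ, k ≤ n → γ2 * ∑ m ∈ Finset.Ico k n, (s2+t2)^m = (s2+t2)^k - (s2+t2)^n := by
  intro n
  induction n with
  | zero => intro h; interval_cases k; simp
  | succ n ih =>
    intro h
    by_cases hk : k ≤ n
    · rw [Finset.sum_Ico_succ_top hk, mul_add, ih hk, hγr, pow_succ]; ring
    · have : k = n+1 := by omega
      subst this
      simp

lemma tailA_final (hγr : γ2 = 1 - (s2+t2)) (hγ2 : 0 ≤ γ2) (hs2 : 0 ≤ s2) (ht2 : 0 ≤ t2)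
    (ha : 0 ≤ a) (hb : 0 ≤ b) (k n : ℕ) :
    tailA γ2 s2 t2 a b n (2*((k:ℤ)+1) - (n:ℤ)) ≤ b * (s2+t2)^k := by
  refine (tailA_bound hγ2 hs2 ht2 ha hb k n).trans ?_
  by_cases hk : k ≤ n
  · have := geom_aux hγr k n hk
    have hpow : (0:ℝ) ≤ (s2+t2)^n := pow_nonneg (by linarith) n
    nlinarith
  · rw [Finset.Ico_eq_empty (by omega)]
    simp
    positivity



lemma oqrw_entries (s t γr a b : ℝ) (n : ℕ) (x : ℤ) :
    oqrwState !![(1:ℂ),0;0,(s:ℂ)] !![(0:ℂ),(γr:ℂ);0,(t:ℂ)] !![(a:ℂ),0;0,(b:ℂ)] n x 0 0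
      = ((Afun (γr^2) (s^2) (t^2) a b n x : ℝ) : ℂ)
    ∧ oqrwState !![(1:ℂ),0;0,(s:ℂ)] !![(0:ℂ),(γr:ℂ);0,(t:ℂ)] !![(a:ℂ),0;0,(b:ℂ)] n x 1 1
      = ((Bfun (s^2) (t^2) b n x : ℝ) : ℂ) := by
  induction n generalizing x with
  | zero =>
    by_cases hx : x = 0 <;> simp [oqrwState, Afun, Bfun, hx]
  | succ n ih =>
    obtain ⟨ihA1, ihB1⟩ := ih (x+1)
    obtain ⟨ihA2, ihB2⟩ := ih (x-1)
    constructor <;>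
    · simp only [oqrwState, Afun, Bfun]
      simp only [Matrix.add_apply, Matrix.mul_apply, Fin.sum_univ_two,
        Matrix.conjTranspose_apply, Matrix.of_apply, Matrix.cons_val', Matrix.cons_val_zero,
        Matrix.cons_val_one, Matrix.head_cons, Matrix.head_fin_const, Matrix.empty_val',
        Matrix.cons_val_fin_one, Complex.star_def, Complex.conj_ofReal, _root_.map_one, _root_.map_zero,
        star_one, star_zero, ihA1, ihB1, ihA2, ihB2, one_mul, mul_one, zero_mul, mul_zero,
        add_zero, zero_add]
      push_cast
      ring



lemma oqrwProb_eq (s t γr a b : ℝ) (n : ℕ) (x : ℤ) :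
    oqrwProb !![(1:ℂ),0;0,(s:ℂ)] !![(0:ℂ),(γr:ℂ);0,(t:ℂ)] !![(a:ℂ),0;0,(b:ℂ)] n x
      = Afun (γr^2) (s^2) (t^2) a b n x + Bfun (s^2) (t^2) b n x := by
  obtain ⟨h1, h2⟩ := oqrw_entries s t γr a b n x
  rw [oqrwProb, Matrix.trace_fin_two, h1, h2]
  simp [Complex.add_re, Complex.ofReal_re]


set_option maxHeartbeats 1000000 in
/-- Example 3, law of large numbers: for the OQRW generated by
`B = [[1,0],[0,√(p-γ²/2)]]`, `C = [[0,γ],[0,√(q-γ²/2)]]`, started at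
`ρ₀ = [[a,0],[0,b]]`, the measures assigning mass `p_x^{(n)}` to `x/n`
converge weakly to `δ_{-1}`. -/
theorem oqrw_example3_lln (p q γ a b : ℝ)
    (hpq : p + q = 1) (hp : p ∈ Set.Ioo (0:ℝ) 1) (hq : q ∈ Set.Ioo (0:ℝ) 1)
    (hγ : 0 < γ) (hγ' : γ ≤ min (Real.sqrt (2 * p)) (Real.sqrt (2 * q)))
    (ha : 0 ≤ a) (hb : 0 ≤ b) (hab : a + b = 1) :
    ∀ f : BoundedContinuousFunction ℝ ℝ,
      Tendsto (fun n : ℕ => ∑' x : ℤ,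
          oqrwProb !![(1 : ℂ), 0; 0, (Real.sqrt (p - γ ^ 2 / 2) : ℂ)]
              !![(0 : ℂ), (γ : ℂ); 0, (Real.sqrt (q - γ ^ 2 / 2) : ℂ)]
              !![(a : ℂ), 0; 0, (b : ℂ)] n x * f ((x : ℝ) / n))
        atTop (nhds (f (-1))) := by
  intro f
  have hγp : γ^2 ≤ 2*p := by
    have h1 : γ ≤ Real.sqrt (2*p) := le_trans hγ' (min_le_left _ _)
    calc γ^2 ≤ (Real.sqrt (2*p))^2 := by
          exact pow_le_pow_left₀ hγ.le h1 2
      _ = 2*p := Real.sq_sqrt (by nlinarith [hp.1])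
  have hγq : γ^2 ≤ 2*q := by
    have h1 : γ ≤ Real.sqrt (2*q) := le_trans hγ' (min_le_right _ _)
    calc γ^2 ≤ (Real.sqrt (2*q))^2 := by
          exact pow_le_pow_left₀ hγ.le h1 2
      _ = 2*q := Real.sq_sqrt (by nlinarith [hq.1])
  set γ2 := γ ^ 2 with hγ2def
  set s2 := p - γ2 / 2 with hs2def
  set t2 := q - γ2 / 2 with ht2def
  have hs2 : 0 ≤ s2 := by rw [hs2def, hγ2def]; linarith
  have ht2 : 0 ≤ t2 := by rw [ht2def, hγ2def]; linarith
  have hγ2 : 0 < γ2 := by rw [hγ2def]; positivity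
  have hγr : γ2 = 1 - (s2 + t2) := by rw [hs2def, ht2def]; linarith
  have hr0 : 0 ≤ s2 + t2 := by linarith
  have hr1 : s2 + t2 < 1 := by linarith
  have hb1 : b ≤ 1 := by linarith
  have hprob : ∀ (n : ℕ) (x : ℤ),
      oqrwProb !![(1 : ℂ), 0; 0, ((Real.sqrt s2 : ℝ) : ℂ)]
        !![(0 : ℂ), (γ : ℂ); 0, ((Real.sqrt t2 : ℝ) : ℂ)]
        !![(a : ℂ), 0; 0, (b : ℂ)] n x
      = Afun γ2 s2 t2 a b n x + Bfun s2 t2 b n x := by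
    intro n x
    rw [oqrwProb_eq (Real.sqrt s2) (Real.sqrt t2) γ a b n x,
      Real.sq_sqrt hs2, Real.sq_sqrt ht2, ← hγ2def]
  simp only [hprob]
  have hAnn := Afun_nonneg hγ2.le hs2 ht2 ha hb (γ2 := γ2) (s2 := s2) (t2 := t2) (a := a) (b := b)
  have hBnn := Bfun_nonneg hs2 ht2 hb (s2 := s2) (t2 := t2) (b := b)
  have hsupA := Afun_support γ2 s2 t2 a b
  have hsupB := Bfun_support s2 t2 b
  rw [Metric.tendsto_atTop]
  intro ε hε
  set D := ‖f‖ + 1 with hDdef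
  have hD0 : (0:ℝ) < D := by positivity
  have hrt : Tendsto (fun m : ℕ => (s2+t2)^m) atTop (nhds 0) :=
    tendsto_pow_atTop_nhds_zero_of_lt_one hr0 hr1
  obtain ⟨k, hk⟩ := ((tendsto_order.1 hrt).2 (ε/(8*D)) (by positivity)).exists
  obtain ⟨δ, hδ0, hδ⟩ := Metric.continuousAt_iff.1 (f.continuous.continuousAt (x := (-1:ℝ))) (ε/4)
    (by positivity)
  obtain ⟨N0, hN0⟩ := exists_nat_ge (2*((k:ℝ)+1)/δ)
  refine ⟨max (max k 1) N0, fun n hn => ?_⟩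
  have hnk : k ≤ n := le_trans (le_trans (le_max_left _ _) (le_max_left _ _)) hn
  have hn1 : 1 ≤ n := le_trans (le_trans (le_max_right _ _) (le_max_left _ _)) hn
  have hn0 : (0:ℝ) < n := by exact_mod_cast hn1
  have hnδ : 2*((k:ℝ)+1) ≤ δ * n := by
    have h1 : 2*((k:ℝ)+1)/δ ≤ (n:ℝ) :=
      le_trans hN0 (by exact_mod_cast le_trans (le_max_right _ _) hn)
    calc 2*((k:ℝ)+1) = (2*((k:ℝ)+1)/δ) * δ := by field_simp
      _ ≤ (n:ℝ) * δ := mul_le_mul_of_nonneg_right h1 hδ0.le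
      _ = δ * n := mul_comm _ _
  set j : ℤ := 2*((k:ℤ)+1) - (n:ℤ) with hjdef
  -- summability
  have SA : Summable (Afun γ2 s2 t2 a b n) := summable_A n
  have SB : Summable (Bfun s2 t2 b n) := summable_B n
  have SP : Summable (fun x : ℤ => Afun γ2 s2 t2 a b n x + Bfun s2 t2 b n x) := SA.add SB
  have Sf : Summable (fun x : ℤ =>
      (Afun γ2 s2 t2 a b n x + Bfun s2 t2 b n x) * f ((x:ℝ)/n)) :=
    summable_support n (fun x hx => by rw [hsupA n x hx, hsupB n x hx]; simp)
  have Sf1 : Summable (fun x : ℤ =>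
      (Afun γ2 s2 t2 a b n x + Bfun s2 t2 b n x) * f (-1)) := SP.mul_right _
  have Sg : Summable (fun x : ℤ =>
      (Afun γ2 s2 t2 a b n x + Bfun s2 t2 b n x) * (f ((x:ℝ)/n) - f (-1))) :=
    summable_support n (fun x hx => by rw [hsupA n x hx, hsupB n x hx]; simp)
  have Site : Summable (fun x : ℤ =>
      if j ≤ x then Afun γ2 s2 t2 a b n x + Bfun s2 t2 b n x else 0) :=
    summable_support n (fun x hx => by rw [hsupA n x hx, hsupB n x hx]; simp)
  -- total mass
  have htot : ∑' x : ℤ, (Afun γ2 s2 t2 a b n x + Bfun s2 t2 b n x) = 1 := by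
    rw [Summable.tsum_add SA SB, tsum_Afun hγr n, tsum_Bfun n]; ring_nf; linarith
  have key : (∑' x : ℤ, (Afun γ2 s2 t2 a b n x + Bfun s2 t2 b n x) * f ((x:ℝ)/n)) - f (-1)
      = ∑' x : ℤ, (Afun γ2 s2 t2 a b n x + Bfun s2 t2 b n x) * (f ((x:ℝ)/n) - f (-1)) := by
    have h2 : ∑' x : ℤ, (Afun γ2 s2 t2 a b n x + Bfun s2 t2 b n x) * (f ((x:ℝ)/n) - f (-1))
        = (∑' x : ℤ, (Afun γ2 s2 t2 a b n x + Bfun s2 t2 b n x) * f ((x:ℝ)/n))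
          - ∑' x : ℤ, (Afun γ2 s2 t2 a b n x + Bfun s2 t2 b n x) * f (-1) := by
      rw [← Summable.tsum_sub Sf Sf1]
      exact tsum_congr (fun x => by ring)
    rw [h2, tsum_mul_right, htot, one_mul]
  rw [Real.dist_eq, key]
  -- bound pointwise
  have hboundpt : ∀ x : ℤ,
      |(Afun γ2 s2 t2 a b n x + Bfun s2 t2 b n x) * (f ((x:ℝ)/n) - f (-1))|
      ≤ ε/4 * (Afun γ2 s2 t2 a b n x + Bfun s2 t2 b n x)
        + (2*‖f‖) * (if j ≤ x then Afun γ2 s2 t2 a b n x + Bfun s2 t2 b n x else 0) := by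
    intro x
    have hP : 0 ≤ Afun γ2 s2 t2 a b n x + Bfun s2 t2 b n x :=
      add_nonneg (hAnn n x) (hBnn n x)
    rw [abs_mul, abs_of_nonneg hP]
    by_cases hx : j ≤ x
    · rw [if_pos hx]
      have h2f : |f ((x:ℝ)/n) - f (-1)| ≤ 2 * ‖f‖ := by
        have := f.dist_le_two_norm ((x:ℝ)/n) (-1)
        rwa [Real.dist_eq] at this
      have h3 := mul_le_mul_of_nonneg_left h2f hP
      have h4 : 0 ≤ ε/4 * (Afun γ2 s2 t2 a b n x + Bfun s2 t2 b n x) :=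
        mul_nonneg (by positivity) hP
      linarith
    · rw [if_neg hx, mul_zero, add_zero]
      by_cases hP0 : Afun γ2 s2 t2 a b n x + Bfun s2 t2 b n x = 0
      · rw [hP0, zero_mul, mul_zero]
      · have hxs : ¬ (x < -(n:ℤ) ∨ (n:ℤ) < x) := by
          intro hcon; exact hP0 (by rw [hsupA n x hcon, hsupB n x hcon, add_zero])
        push_neg at hxs
        obtain ⟨hx1, hx2⟩ := hxs
        have hdist : dist ((x:ℝ)/n) (-1) < δ := by
          rw [Real.dist_eq]
          have hxn : (0:ℝ) ≤ (x:ℝ) + n := by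
            have : (0:ℤ) ≤ x + n := by omega
            exact_mod_cast this
          have hxj : (x:ℝ) ≤ 2*((k:ℝ)+1) - n - 1 := by
            have : x ≤ 2*((k:ℤ)+1) - (n:ℤ) - 1 := by rw [hjdef] at hx; omega
            exact_mod_cast this
          have heq : (x:ℝ)/n - (-1) = ((x:ℝ)+n)/n := by field_simp; ring
          rw [heq, abs_of_nonneg (div_nonneg hxn hn0.le), div_lt_iff₀ hn0]
          linarith
        have hfd := hδ hdist
        rw [Real.dist_eq] at hfd
        exact le_trans (mul_le_mul_of_nonneg_left hfd.le hP) (le_of_eq (mul_comm _ _))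
  -- sum the bound
  have Sbound : Summable (fun x : ℤ =>
      ε/4 * (Afun γ2 s2 t2 a b n x + Bfun s2 t2 b n x)
        + (2*‖f‖) * (if j ≤ x then Afun γ2 s2 t2 a b n x + Bfun s2 t2 b n x else 0)) :=
    (SP.mul_left _).add (Site.mul_left _)
  have habs : |∑' x : ℤ, (Afun γ2 s2 t2 a b n x + Bfun s2 t2 b n x)
      * (f ((x:ℝ)/n) - f (-1))| ≤ ∑' x : ℤ,
      |(Afun γ2 s2 t2 a b n x + Bfun s2 t2 b n x) * (f ((x:ℝ)/n) - f (-1))| := by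
    have h := norm_tsum_le_tsum_norm (f := fun x : ℤ =>
      (Afun γ2 s2 t2 a b n x + Bfun s2 t2 b n x) * (f ((x:ℝ)/n) - f (-1)))
      (by simp only [Real.norm_eq_abs]; exact Sg.abs)
    simp only [Real.norm_eq_abs] at h
    exact h
  have hsum1 : ∑' x : ℤ, |(Afun γ2 s2 t2 a b n x + Bfun s2 t2 b n x)
      * (f ((x:ℝ)/n) - f (-1))| ≤ ∑' x : ℤ,
      (ε/4 * (Afun γ2 s2 t2 a b n x + Bfun s2 t2 b n x)
        + (2*‖f‖) * (if j ≤ x then Afun γ2 s2 t2 a b n x + Bfun s2 t2 b n x else 0)) :=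
    Summable.tsum_le_tsum hboundpt Sg.abs Sbound
  have hsplit : ∑' x : ℤ,
      (ε/4 * (Afun γ2 s2 t2 a b n x + Bfun s2 t2 b n x)
        + (2*‖f‖) * (if j ≤ x then Afun γ2 s2 t2 a b n x + Bfun s2 t2 b n x else 0))
      = ε/4 + (2*‖f‖) * (tailA γ2 s2 t2 a b n j + tailB s2 t2 b n j) := by
    rw [Summable.tsum_add (SP.mul_left _) (Site.mul_left _), tsum_mul_left, tsum_mul_left, htot, mul_one]
    congr 1
    congr 1
    rw [tailA, tailB, ← Summable.tsum_add (summable_tailA n j) (summable_tailB n j)]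
    refine tsum_congr (fun x => ?_)
    by_cases hx : j ≤ x <;> simp [hx]
  have htailA : tailA γ2 s2 t2 a b n j ≤ b * (s2+t2)^k := by
    rw [hjdef]
    exact tailA_final hγr hγ2.le hs2 ht2 ha hb k n
  have htailB : tailB s2 t2 b n j ≤ (s2+t2)^k := by
    refine (tailB_le hs2 ht2 hb n j).trans ?_
    calc (s2+t2)^n * b ≤ (s2+t2)^n * 1 := by
          exact mul_le_mul_of_nonneg_left hb1 (pow_nonneg hr0 n)
      _ = (s2+t2)^n := mul_one _
      _ ≤ (s2+t2)^k := pow_le_pow_of_le_one hr0 hr1.le hnk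
  have hfD : ‖f‖ ≤ D - 1 + 1 := by rw [hDdef]; linarith
  have hpk : (0:ℝ) ≤ (s2+t2)^k := pow_nonneg hr0 k
  have htA0 : 0 ≤ tailA γ2 s2 t2 a b n j := tailA_nonneg hγ2.le hs2 ht2 ha hb n j
  have htB0 : 0 ≤ tailB s2 t2 b n j := tailB_nonneg hs2 ht2 hb n j
  have hfn : 0 ≤ ‖f‖ := norm_nonneg f
  calc |∑' x : ℤ, (Afun γ2 s2 t2 a b n x + Bfun s2 t2 b n x) * (f ((x:ℝ)/n) - f (-1))|
      ≤ ε/4 + (2*‖f‖) * (tailA γ2 s2 t2 a b n j + tailB s2 t2 b n j) := by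
        rw [← hsplit]; exact habs.trans hsum1
    _ < ε := by
        have hmul : (2*‖f‖) * (tailA γ2 s2 t2 a b n j + tailB s2 t2 b n j)
            ≤ (2*‖f‖) * (b * (s2+t2)^k + (s2+t2)^k) := by
          refine mul_le_mul_of_nonneg_left (add_le_add htailA htailB) (by positivity)
        have h1 : (2*‖f‖) * (b*(s2+t2)^k + (s2+t2)^k) ≤ (2*‖f‖) * (2*(s2+t2)^k) := by
          have := mul_le_of_le_one_left hpk hb1
          refine mul_le_mul_of_nonneg_left (by linarith) (by positivity)
        have h3 : 4*‖f‖*(s2+t2)^k ≤ 4*D*(s2+t2)^k :=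
          mul_le_mul_of_nonneg_right (by rw [hDdef]; linarith) hpk
        have h4 : 4*D*(s2+t2)^k < 4*D*(ε/(8*D)) :=
          mul_lt_mul_of_pos_left hk (by positivity)
        have h5 : 4*D*(ε/(8*D)) = ε/2 := by field_simp; ring
        nlinarith [hmul]
end

section
/- Let p + q = 1 with p, q ∈ (0,1) and let 0 < γ ≤ min{√(2p), √(2q)}. Consider the OQRW on ℤ generated by B = [[1,0],[0,√(p−γ²/2)]] and C = [[0,γ],[0,√(q−γ²/2)]], with initial density matrix ρ₀ = [[a,0],[0,b]] (a + b = 1, a, b ≥ 0). Then for every α > 0, the probability measures μ_n on ℝ assigning mass p_x^{(n)} to the point (x + n)/n^α converge weakly, as n → ∞, to the Dirac measure δ_0. -/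
open MeasureTheory Filter Matrix
open scoped ComplexOrder

/-! ### Auxiliary lemmas -/

lemma oqrwState_eq_zero (B C ρ₀ : Matrix (Fin 2) (Fin 2) ℂ) :
    ∀ (n : ℕ) (x : ℤ), ((n:ℤ) < x ∨ x < -(n:ℤ)) → oqrwState B C ρ₀ n x = 0
  | 0, x, h => by
    have : x ≠ 0 := by omega
    simp [oqrwState, this]
  | n+1, x, h => by
    have h1 : ((n:ℤ) < x+1 ∨ x+1 < -(n:ℤ)) := by push_cast at h ⊢; omega
    have h2 : ((n:ℤ) < x-1 ∨ x-1 < -(n:ℤ)) := by push_cast at h ⊢; omega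
    simp [oqrwState, oqrwState_eq_zero B C ρ₀ n _ h1, oqrwState_eq_zero B C ρ₀ n _ h2]

lemma oqrwState_posSemidef {B C ρ₀ : Matrix (Fin 2) (Fin 2) ℂ} (h : ρ₀.PosSemidef) :
    ∀ (n : ℕ) (x : ℤ), (oqrwState B C ρ₀ n x).PosSemidef
  | 0, x => by
    by_cases hx : x = 0
    · simpa [oqrwState, hx] using h
    · simpa [oqrwState, hx] using Matrix.PosSemidef.zero
  | n+1, x =>
    ((oqrwState_posSemidef h n (x+1)).mul_mul_conjTranspose_same B).add
      ((oqrwState_posSemidef h n (x-1)).mul_mul_conjTranspose_same C)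

lemma summable_of_bounds {M : Type*} [AddCommMonoid M] [TopologicalSpace M]
    (g : ℤ → M) (lo hi : ℤ) (h : ∀ x : ℤ, x < lo ∨ hi < x → g x = 0) : Summable g :=
  summable_of_ne_finset_zero (s := Finset.Icc lo hi) fun x hx => h x (by
    simp only [Finset.mem_Icc, not_and_or, not_le] at hx
    omega)

lemma posSemidef_re_trace_nonneg {M : Matrix (Fin 2) (Fin 2) ℂ} (h : M.PosSemidef) :
    0 ≤ M.trace.re := by
  have h0 : 0 ≤ M 0 0 := h.diag_nonneg
  have h1 : 0 ≤ M 1 1 := h.diag_nonneg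
  have ht : M.trace = M 0 0 + M 1 1 := by simp [Matrix.trace, Fin.sum_univ_two]
  rw [ht]
  have := (Complex.le_def.mp h0).1
  have := (Complex.le_def.mp h1).1
  simp only [Complex.add_re]
  simp at *
  linarith

lemma exR_posSemidef (a b : ℝ) (ha : 0 ≤ a) (hb : 0 ≤ b) :
    (!![(a : ℂ), 0; 0, (b : ℂ)]).PosSemidef := by
  have : !![(a : ℂ), 0; 0, (b : ℂ)] = Matrix.diagonal ![(a:ℂ), (b:ℂ)] := by
    ext i j; fin_cases i <;> fin_cases j <;> simp [Matrix.diagonal]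
  rw [this]
  refine Matrix.posSemidef_diagonal_iff.mpr fun i => ?_
  fin_cases i
  · simpa using (by exact_mod_cast ha : (0:ℂ) ≤ (a:ℂ))
  · simpa using (by exact_mod_cast hb : (0:ℂ) ≤ (b:ℂ))

lemma traceB_aux (β : ℝ) (M : Matrix (Fin 2) (Fin 2) ℂ) :
    (!![(1:ℂ),0;0,(β:ℂ)] * M * (!![(1:ℂ),0;0,(β:ℂ)])ᴴ).trace
      = M 0 0 + ((β^2 : ℝ) : ℂ) * M 1 1 := by
  simp [Matrix.trace, Matrix.mul_apply, Fin.sum_univ_two, conjTranspose_apply,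
    Complex.conj_ofReal, Matrix.vecMul, dotProduct, Matrix.vecHead, Matrix.vecTail]
  ring

lemma traceC_aux (γ δ : ℝ) (M : Matrix (Fin 2) (Fin 2) ℂ) :
    (!![(0:ℂ),(γ:ℂ);0,(δ:ℂ)] * M * (!![(0:ℂ),(γ:ℂ);0,(δ:ℂ)])ᴴ).trace
      = ((γ^2 + δ^2 : ℝ) : ℂ) * M 1 1 := by
  simp [Matrix.trace, Matrix.mul_apply, Fin.sum_univ_two, conjTranspose_apply,
    Complex.conj_ofReal, Matrix.vecMul, dotProduct, Matrix.vecHead, Matrix.vecTail]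
  push_cast
  ring

lemma entryB_aux (β : ℝ) (M : Matrix (Fin 2) (Fin 2) ℂ) :
    (!![(1:ℂ),0;0,(β:ℂ)] * M * (!![(1:ℂ),0;0,(β:ℂ)])ᴴ) 1 1 = ((β^2:ℝ):ℂ) * M 1 1 := by
  simp [Matrix.mul_apply, Fin.sum_univ_two, conjTranspose_apply,
    Complex.conj_ofReal, Matrix.vecMul, dotProduct, Matrix.vecHead, Matrix.vecTail]
  push_cast
  ring

lemma entryC_aux (γ δ : ℝ) (M : Matrix (Fin 2) (Fin 2) ℂ) :
    (!![(0:ℂ),(γ:ℂ);0,(δ:ℂ)] * M * (!![(0:ℂ),(γ:ℂ);0,(δ:ℂ)])ᴴ) 1 1 = ((δ^2:ℝ):ℂ) * M 1 1 := by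
  simp [Matrix.mul_apply, Fin.sum_univ_two, conjTranspose_apply,
    Complex.conj_ofReal, Matrix.vecMul, dotProduct, Matrix.vecHead, Matrix.vecTail]
  push_cast
  ring

/-! ### The specific walk of Example 3 -/

noncomputable def exB (p γ : ℝ) : Matrix (Fin 2) (Fin 2) ℂ :=
  !![(1 : ℂ), 0; 0, (Real.sqrt (p - γ ^ 2 / 2) : ℂ)]

noncomputable def exC (q γ : ℝ) : Matrix (Fin 2) (Fin 2) ℂ :=
  !![(0 : ℂ), (γ : ℂ); 0, (Real.sqrt (q - γ ^ 2 / 2) : ℂ)]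

noncomputable def exS (p q γ a b : ℝ) (n : ℕ) (x : ℤ) : Matrix (Fin 2) (Fin 2) ℂ :=
  oqrwState (exB p γ) (exC q γ) !![(a : ℂ), 0; 0, (b : ℂ)] n x

noncomputable def trBf (p q γ a b : ℝ) (n : ℕ) (y : ℤ) : ℂ :=
  (exB p γ * exS p q γ a b n y * (exB p γ)ᴴ).trace

noncomputable def trCf (p q γ a b : ℝ) (n : ℕ) (y : ℤ) : ℂ :=
  (exC q γ * exS p q γ a b n y * (exC q γ)ᴴ).trace

noncomputable def enBf (p q γ a b : ℝ) (n : ℕ) (y : ℤ) : ℂ :=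
  (exB p γ * exS p q γ a b n y * (exB p γ)ᴴ) 1 1

noncomputable def enCf (p q γ a b : ℝ) (n : ℕ) (y : ℤ) : ℂ :=
  (exC q γ * exS p q γ a b n y * (exC q γ)ᴴ) 1 1

lemma step_trace (p q γ : ℝ) (hβ : 0 ≤ p - γ^2/2) (hδ : 0 ≤ q - γ^2/2) (hpq : p + q = 1)
    (M : Matrix (Fin 2) (Fin 2) ℂ) :
    (exB p γ * M * (exB p γ)ᴴ).trace + (exC q γ * M * (exC q γ)ᴴ).trace = M.trace := by
  rw [exB, exC, traceB_aux, traceC_aux, Real.sq_sqrt hβ, Real.sq_sqrt hδ]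
  have ht : M.trace = M 0 0 + M 1 1 := by simp [Matrix.trace, Fin.sum_univ_two]
  rw [ht]
  have h1 : ((p - γ^2/2 : ℝ) : ℂ) + ((γ^2 + (q - γ^2/2) : ℝ) : ℂ) = 1 := by
    push_cast
    have : (p:ℂ) + q = 1 := by exact_mod_cast congrArg (Complex.ofReal) hpq
    linear_combination this
  linear_combination M 1 1 * h1

lemma step_entry (p q γ : ℝ) (hβ : 0 ≤ p - γ^2/2) (hδ : 0 ≤ q - γ^2/2) (hpq : p + q = 1)
    (M : Matrix (Fin 2) (Fin 2) ℂ) :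
    (exB p γ * M * (exB p γ)ᴴ) 1 1 + (exC q γ * M * (exC q γ)ᴴ) 1 1
      = ((1 - γ^2 : ℝ) : ℂ) * M 1 1 := by
  rw [exB, exC, entryB_aux, entryC_aux, Real.sq_sqrt hβ, Real.sq_sqrt hδ]
  have h1 : ((p - γ^2/2 : ℝ) : ℂ) + ((q - γ^2/2 : ℝ) : ℂ) = ((1 - γ^2 : ℝ) : ℂ) := by
    push_cast
    have : (p:ℂ) + q = 1 := by exact_mod_cast congrArg (Complex.ofReal) hpq
    linear_combination this
  linear_combination M 1 1 * h1

lemma step_traceC (p q γ : ℝ) (hδ : 0 ≤ q - γ^2/2) (M : Matrix (Fin 2) (Fin 2) ℂ) :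
    (exC q γ * M * (exC q γ)ᴴ).trace = ((γ^2 + (q - γ^2/2) : ℝ) : ℂ) * M 1 1 := by
  rw [exC, traceC_aux, Real.sq_sqrt hδ]

lemma exS_zero (p q γ a b : ℝ) (n : ℕ) (x : ℤ) (h : (n:ℤ) < x ∨ x < -(n:ℤ)) :
    exS p q γ a b n x = 0 :=
  oqrwState_eq_zero _ _ _ n x h

lemma summable_trBf (p q γ a b : ℝ) (n : ℕ) (c : ℤ) :
    Summable (fun x : ℤ => trBf p q γ a b n (x + c)) :=
  summable_of_bounds _ (-(n:ℤ) - c) ((n:ℤ) - c) (fun x hx => by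
    have : exS p q γ a b n (x + c) = 0 := exS_zero _ _ _ _ _ _ _ (by omega)
    simp [trBf, this])

lemma summable_trCf (p q γ a b : ℝ) (n : ℕ) (c : ℤ) :
    Summable (fun x : ℤ => trCf p q γ a b n (x + c)) :=
  summable_of_bounds _ (-(n:ℤ) - c) ((n:ℤ) - c) (fun x hx => by
    have : exS p q γ a b n (x + c) = 0 := exS_zero _ _ _ _ _ _ _ (by omega)
    simp [trCf, this])

lemma sum_trace (p q γ a b : ℝ) (hβ : 0 ≤ p - γ^2/2) (hδ : 0 ≤ q - γ^2/2)
    (hpq : p + q = 1) :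
    ∀ n : ℕ, ∑' x : ℤ, (exS p q γ a b n x).trace = ((a + b : ℝ) : ℂ)
  | 0 => by
    have hfun : (fun x : ℤ => (exS p q γ a b 0 x).trace)
        = fun x : ℤ => if x = 0 then ((a + b : ℝ) : ℂ) else 0 := by
      funext x
      by_cases hx : x = 0
      · simp [exS, oqrwState, hx, Matrix.trace, Fin.sum_univ_two]
      · simp [exS, oqrwState, hx]
    rw [hfun, tsum_ite_eq]
  | n+1 => by
    have key : ∑' x : ℤ, (exS p q γ a b (n+1) x).trace
        = ∑' x : ℤ, (trBf p q γ a b n (x + 1) + trCf p q γ a b n (x + (-1))) := by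
      refine tsum_congr fun x => ?_
      show (oqrwState _ _ _ (n+1) x).trace = _
      rw [oqrwState]
      have hx : x + (-1 : ℤ) = x - 1 := by ring
      simp [trBf, trCf, exS, hx]
    rw [key, Summable.tsum_add (summable_trBf p q γ a b n 1) (summable_trCf p q γ a b n (-1))]
    have e1 : ∑' x : ℤ, trBf p q γ a b n (x + 1) = ∑' x : ℤ, trBf p q γ a b n x :=
      (Equiv.addRight (1:ℤ)).tsum_eq (trBf p q γ a b n)
    have e2 : ∑' x : ℤ, trCf p q γ a b n (x + (-1)) = ∑' x : ℤ, trCf p q γ a b n x :=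
      (Equiv.addRight (-1:ℤ)).tsum_eq (trCf p q γ a b n)
    rw [e1, e2, ← Summable.tsum_add (summable_trBf p q γ a b n 0 |>.congr (by simp))
      (summable_trCf p q γ a b n 0 |>.congr (by simp))]
    have : ∑' x : ℤ, (trBf p q γ a b n x + trCf p q γ a b n x)
        = ∑' x : ℤ, (exS p q γ a b n x).trace :=
      tsum_congr fun x => step_trace p q γ hβ hδ hpq _
    rw [this, sum_trace p q γ a b hβ hδ hpq n]

lemma sum_entry (p q γ a b : ℝ) (hβ : 0 ≤ p - γ^2/2) (hδ : 0 ≤ q - γ^2/2)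
    (hpq : p + q = 1) :
    ∀ n : ℕ, ∑' x : ℤ, (exS p q γ a b n x) 1 1 = ((b * (1 - γ^2)^n : ℝ) : ℂ)
  | 0 => by
    have hfun : (fun x : ℤ => (exS p q γ a b 0 x) 1 1)
        = fun x : ℤ => if x = 0 then ((b : ℝ) : ℂ) else 0 := by
      funext x
      by_cases hx : x = 0
      · simp [exS, oqrwState, hx]
      · simp [exS, oqrwState, hx]
    rw [hfun, tsum_ite_eq]
    push_cast
    ring
  | n+1 => by
    have key : ∑' x : ℤ, (exS p q γ a b (n+1) x) 1 1
        = ∑' x : ℤ, (enBf p q γ a b n (x + 1) + enCf p q γ a b n (x + (-1))) := by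
      refine tsum_congr fun x => ?_
      show (oqrwState _ _ _ (n+1) x) 1 1 = _
      rw [oqrwState]
      have hx : x + (-1 : ℤ) = x - 1 := by ring
      simp [enBf, enCf, exS, hx]
    have sB1 : Summable (fun x : ℤ => enBf p q γ a b n (x + 1)) :=
      summable_of_bounds _ (-(n:ℤ) - 1) ((n:ℤ) - 1) (fun x hx => by
        have : exS p q γ a b n (x + 1) = 0 := exS_zero _ _ _ _ _ _ _ (by omega)
        simp [enBf, this])
    have sC1 : Summable (fun x : ℤ => enCf p q γ a b n (x + (-1))) :=
      summable_of_bounds _ (-(n:ℤ) + 1) ((n:ℤ) + 1) (fun x hx => by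
        have : exS p q γ a b n (x + (-1)) = 0 := exS_zero _ _ _ _ _ _ _ (by omega)
        simp [enCf, this])
    have sB0 : Summable (fun x : ℤ => enBf p q γ a b n x) :=
      summable_of_bounds _ (-(n:ℤ)) n (fun x hx => by
        have : exS p q γ a b n x = 0 := exS_zero _ _ _ _ _ _ _ (by omega)
        simp [enBf, this])
    have sC0 : Summable (fun x : ℤ => enCf p q γ a b n x) :=
      summable_of_bounds _ (-(n:ℤ)) n (fun x hx => by
        have : exS p q γ a b n x = 0 := exS_zero _ _ _ _ _ _ _ (by omega)
        simp [enCf, this])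
    rw [key, Summable.tsum_add sB1 sC1]
    have e1 : ∑' x : ℤ, enBf p q γ a b n (x + 1) = ∑' x : ℤ, enBf p q γ a b n x :=
      (Equiv.addRight (1:ℤ)).tsum_eq (enBf p q γ a b n)
    have e2 : ∑' x : ℤ, enCf p q γ a b n (x + (-1)) = ∑' x : ℤ, enCf p q γ a b n x :=
      (Equiv.addRight (-1:ℤ)).tsum_eq (enCf p q γ a b n)
    rw [e1, e2, ← Summable.tsum_add sB0 sC0]
    have : ∑' x : ℤ, (enBf p q γ a b n x + enCf p q γ a b n x)
        = ∑' x : ℤ, ((1 - γ^2 : ℝ) : ℂ) * (exS p q γ a b n x) 1 1 :=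
      tsum_congr fun x => step_entry p q γ hβ hδ hpq _
    rw [this, tsum_mul_left, sum_entry p q γ a b hβ hδ hpq n]
    push_cast
    ring

lemma sum_weighted (p q γ a b : ℝ) (hβ : 0 ≤ p - γ^2/2) (hδ : 0 ≤ q - γ^2/2)
    (hpq : p + q = 1) :
    ∀ n : ℕ, ∑' x : ℤ, ((x : ℂ) + (n : ℂ)) * (exS p q γ a b n x).trace
      = ((2 * (γ^2 + (q - γ^2/2)) * b * (∑ k ∈ Finset.range n, (1-γ^2)^k) : ℝ) : ℂ)
  | 0 => by
    have hfun : (fun x : ℤ => ((x : ℂ) + ((0:ℕ) : ℂ)) * (exS p q γ a b 0 x).trace)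
        = fun _ : ℤ => (0 : ℂ) := by
      funext x
      by_cases hx : x = 0
      · simp [hx]
      · simp [exS, oqrwState, hx]
    rw [hfun, tsum_zero]
    simp
  | n+1 => by
    have key : ∑' x : ℤ, ((x : ℂ) + ((n+1 : ℕ) : ℂ)) * (exS p q γ a b (n+1) x).trace
        = ∑' x : ℤ, ((((x+1 : ℤ) : ℂ) + (n : ℂ)) * trBf p q γ a b n (x+1)
            + (((x + (-1) : ℤ) : ℂ) + (n : ℂ) + 2) * trCf p q γ a b n (x + (-1))) := by
      refine tsum_congr fun x => ?_
      show ((x : ℂ) + ((n+1 : ℕ) : ℂ)) * (oqrwState _ _ _ (n+1) x).trace = _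
      rw [oqrwState]
      have hx : x + (-1 : ℤ) = x - 1 := by ring
      simp only [trBf, trCf, exS, hx, Matrix.trace_add]
      push_cast
      ring
    have sB1 : Summable (fun x : ℤ => (((x+1 : ℤ) : ℂ) + (n : ℂ)) * trBf p q γ a b n (x+1)) :=
      summable_of_bounds _ (-(n:ℤ)-1) ((n:ℤ)-1) (fun x hx => by
        have : exS p q γ a b n (x+1) = 0 := exS_zero _ _ _ _ _ _ _ (by omega)
        simp [trBf, this])
    have sC1 : Summable (fun x : ℤ =>
        (((x + (-1) : ℤ) : ℂ) + (n : ℂ) + 2) * trCf p q γ a b n (x + (-1))) :=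
      summable_of_bounds _ (-(n:ℤ)+1) ((n:ℤ)+1) (fun x hx => by
        have : exS p q γ a b n (x + (-1)) = 0 := exS_zero _ _ _ _ _ _ _ (by omega)
        simp [trCf, this])
    have sB0 : Summable (fun y : ℤ => ((y : ℂ) + (n : ℂ)) * trBf p q γ a b n y) :=
      summable_of_bounds _ (-(n:ℤ)) n (fun y hy => by
        have : exS p q γ a b n y = 0 := exS_zero _ _ _ _ _ _ _ (by omega)
        simp [trBf, this])
    have sC0 : Summable (fun y : ℤ => ((y : ℂ) + (n : ℂ) + 2) * trCf p q γ a b n y) :=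
      summable_of_bounds _ (-(n:ℤ)) n (fun y hy => by
        have : exS p q γ a b n y = 0 := exS_zero _ _ _ _ _ _ _ (by omega)
        simp [trCf, this])
    rw [key, Summable.tsum_add sB1 sC1]
    have e1 : (∑' x : ℤ, (((x+1 : ℤ) : ℂ) + (n : ℂ)) * trBf p q γ a b n (x+1))
        = ∑' y : ℤ, ((y : ℂ) + (n : ℂ)) * trBf p q γ a b n y :=
      (Equiv.addRight (1:ℤ)).tsum_eq (fun y : ℤ => ((y : ℂ) + (n : ℂ)) * trBf p q γ a b n y)
    have e2 : (∑' x : ℤ, (((x + (-1) : ℤ) : ℂ) + (n : ℂ) + 2) * trCf p q γ a b n (x + (-1)))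
        = ∑' y : ℤ, ((y : ℂ) + (n : ℂ) + 2) * trCf p q γ a b n y :=
      (Equiv.addRight (-1:ℤ)).tsum_eq
        (fun y : ℤ => ((y : ℂ) + (n : ℂ) + 2) * trCf p q γ a b n y)
    rw [e1, e2, ← Summable.tsum_add sB0 sC0]
    have split : (fun y : ℤ => ((y : ℂ) + (n : ℂ)) * trBf p q γ a b n y
          + ((y : ℂ) + (n : ℂ) + 2) * trCf p q γ a b n y)
        = fun y : ℤ => ((y : ℂ) + (n : ℂ)) * (exS p q γ a b n y).trace
          + (2 * ((γ^2 + (q - γ^2/2) : ℝ) : ℂ)) * (exS p q γ a b n y) 1 1 := by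
      funext y
      have h1 := step_trace p q γ hβ hδ hpq (exS p q γ a b n y)
      have h2 := step_traceC p q γ hδ (exS p q γ a b n y)
      rw [trBf, trCf]
      linear_combination ((y : ℂ) + (n : ℂ)) * h1 + 2 * h2
    have sW : Summable (fun y : ℤ => ((y : ℂ) + (n : ℂ)) * (exS p q γ a b n y).trace) :=
      summable_of_bounds _ (-(n:ℤ)) n (fun y hy => by
        have : exS p q γ a b n y = 0 := exS_zero _ _ _ _ _ _ _ (by omega)
        simp [this])
    have sE : Summable (fun y : ℤ =>
        (2 * ((γ^2 + (q - γ^2/2) : ℝ) : ℂ)) * (exS p q γ a b n y) 1 1) :=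
      summable_of_bounds _ (-(n:ℤ)) n (fun y hy => by
        have : exS p q γ a b n y = 0 := exS_zero _ _ _ _ _ _ _ (by omega)
        simp [this])
    rw [split, Summable.tsum_add sW sE, tsum_mul_left, sum_entry p q γ a b hβ hδ hpq n,
      sum_weighted p q γ a b hβ hδ hpq n, Finset.sum_range_succ]
    push_cast
    ring

set_option maxHeartbeats 1000000 in
/-- Example 3, law of large numbers: for the OQRW generated by
`B = [[1,0],[0,√(p-γ²/2)]]`, `C = [[0,γ],[0,√(q-γ²/2)]]`, started at
`ρ₀ = [[a,0],[0,b]]`, the measures assigning mass `p_x^{(n)}` to `(x+n)/n^α`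
converge weakly to `δ_0` for each scaling exponent `α > 0`. -/
theorem oqrw_example3_scaling (p q γ a b : ℝ)
    (hpq : p + q = 1) (hp : p ∈ Set.Ioo (0:ℝ) 1) (hq : q ∈ Set.Ioo (0:ℝ) 1)
    (hγ : 0 < γ) (hγ' : γ ≤ min (Real.sqrt (2 * p)) (Real.sqrt (2 * q)))
    (ha : 0 ≤ a) (hb : 0 ≤ b) (hab : a + b = 1) (α : ℝ) (hα : 0 < α) :
    ∀ f : BoundedContinuousFunction ℝ ℝ,
      Tendsto (fun n : ℕ => ∑' x : ℤ,
          oqrwProb !![(1 : ℂ), 0; 0, (Real.sqrt (p - γ ^ 2 / 2) : ℂ)]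
              !![(0 : ℂ), (γ : ℂ); 0, (Real.sqrt (q - γ ^ 2 / 2) : ℂ)]
              !![(a : ℂ), 0; 0, (b : ℂ)] n x * f (((x : ℝ) + n) / (n : ℝ) ^ α))
        atTop (nhds (f 0)) := by
  intro f
  have hrw : ∀ (n : ℕ) (x : ℤ),
      oqrwProb !![(1 : ℂ), 0; 0, (Real.sqrt (p - γ ^ 2 / 2) : ℂ)]
        !![(0 : ℂ), (γ : ℂ); 0, (Real.sqrt (q - γ ^ 2 / 2) : ℂ)]
        !![(a : ℂ), 0; 0, (b : ℂ)] n x = (exS p q γ a b n x).trace.re :=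
    fun n x => rfl
  simp only [hrw]
  obtain ⟨hp0, hp1⟩ := hp
  obtain ⟨hq0, hq1⟩ := hq
  have h2p : γ^2 ≤ 2*p := by
    have h1 : γ ≤ Real.sqrt (2*p) := le_trans hγ' (min_le_left _ _)
    have h2 := Real.sq_sqrt (by linarith : (0:ℝ) ≤ 2*p)
    nlinarith [Real.sqrt_nonneg (2*p)]
  have h2q : γ^2 ≤ 2*q := by
    have h1 : γ ≤ Real.sqrt (2*q) := le_trans hγ' (min_le_right _ _)
    have h2 := Real.sq_sqrt (by linarith : (0:ℝ) ≤ 2*q)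
    nlinarith [Real.sqrt_nonneg (2*q)]
  have hβ : 0 ≤ p - γ^2/2 := by linarith
  have hδ : 0 ≤ q - γ^2/2 := by linarith
  have hγ2 : 0 < γ^2 := by positivity
  have hγ1 : γ^2 ≤ 1 := by linarith
  have hpos : ∀ (n : ℕ) (x : ℤ), 0 ≤ (exS p q γ a b n x).trace.re := fun n x =>
    posSemidef_re_trace_nonneg (oqrwState_posSemidef (exR_posSemidef a b ha hb) n x)
  have hzero : ∀ (n : ℕ) (x : ℤ), ((n:ℤ) < x ∨ x < -(n:ℤ)) →
      (exS p q γ a b n x).trace.re = 0 := by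
    intro n x hx
    rw [exS_zero p q γ a b n x hx]
    simp
  have hsum_f : ∀ (n : ℕ) (g : ℤ → ℝ),
      Summable (fun x : ℤ => (exS p q γ a b n x).trace.re * g x) := fun n g =>
    summable_of_bounds _ (-(n:ℤ)) n (fun x hx => by rw [hzero n x (by omega)]; ring)
  -- total mass is one
  have hPsum1 : ∀ n : ℕ, ∑' x : ℤ, (exS p q γ a b n x).trace.re = 1 := by
    intro n
    have hs : Summable (fun x : ℤ => (exS p q γ a b n x).trace) :=
      summable_of_bounds _ (-(n:ℤ)) n (fun x hx => by
        rw [exS_zero p q γ a b n x (by omega)]; simp)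
    have := Complex.re_tsum hs
    rw [← this, sum_trace p q γ a b hβ hδ hpq n, Complex.ofReal_re, hab]
  -- first moment bound
  have hMom : ∀ n : ℕ, ∑' x : ℤ, ((x:ℝ)+n) * (exS p q γ a b n x).trace.re ≤ 2*b/γ^2 := by
    intro n
    have hs : Summable (fun x : ℤ => ((x:ℂ)+(n:ℂ)) * (exS p q γ a b n x).trace) :=
      summable_of_bounds _ (-(n:ℤ)) n (fun x hx => by
        rw [exS_zero p q γ a b n x (by omega)]; simp)
    have h1 : ∑' x : ℤ, ((x:ℝ)+n) * (exS p q γ a b n x).trace.re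
        = (∑' x : ℤ, ((x:ℂ)+(n:ℂ)) * (exS p q γ a b n x).trace).re := by
      rw [Complex.re_tsum hs]
      refine tsum_congr fun x => ?_
      have h2 : ((x:ℂ)+(n:ℂ)) = (((x:ℝ)+(n:ℝ) : ℝ) : ℂ) := by push_cast; ring
      rw [h2]
      simp [Complex.mul_re]
    rw [h1, sum_weighted p q γ a b hβ hδ hpq n, Complex.ofReal_re]
    have hG0 : 0 ≤ ∑ k ∈ Finset.range n, (1-γ^2)^k :=
      Finset.sum_nonneg fun k _ => pow_nonneg (by linarith) k
    have hGle : ∑ k ∈ Finset.range n, (1-γ^2)^k ≤ 1/γ^2 := by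
      have hr1 : (1 - γ^2 : ℝ) ≠ 1 := by intro h; nlinarith
      rw [geom_sum_eq hr1]
      have hA0 : 0 ≤ (1-γ^2:ℝ)^n := pow_nonneg (by linarith) n
      have key : ((1-γ^2:ℝ)^n - 1)/((1-γ^2) - 1) = (1 - (1-γ^2)^n)/γ^2 := by
        rw [div_eq_div_iff (by intro h; nlinarith) (by positivity)]
        ring
      rw [key]
      gcongr
      linarith
    have hc0 : 0 ≤ γ^2 + (q - γ^2/2) := by linarith
    have hc1 : γ^2 + (q - γ^2/2) ≤ 1 := by linarith
    have hcG : (γ^2 + (q - γ^2/2)) * (∑ k ∈ Finset.range n, (1-γ^2)^k) ≤ 1 * (1/γ^2) :=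
      mul_le_mul hc1 hGle hG0 zero_le_one
    have h13 := mul_le_mul_of_nonneg_left hcG hb
    calc 2 * (γ^2 + (q - γ^2/2)) * b * (∑ k ∈ Finset.range n, (1-γ^2)^k)
        = 2 * (b * ((γ^2 + (q - γ^2/2)) * (∑ k ∈ Finset.range n, (1-γ^2)^k))) := by ring
      _ ≤ 2 * (b * (1 * (1/γ^2))) := by linarith
      _ = 2*b/γ^2 := by ring
  -- the limit
  rw [Metric.tendsto_atTop]
  intro ε hε
  obtain ⟨η, hη, hfc⟩ := Metric.continuousAt_iff.mp (f.continuous.continuousAt (x := 0))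
    (ε/2) (by linarith)
  have hK0 : 0 ≤ 2*‖f‖/η := by positivity
  have hlim : Tendsto (fun n : ℕ => (2*‖f‖/η) * (2*b/γ^2) / (n:ℝ)^α) atTop (nhds 0) := by
    apply Tendsto.div_atTop tendsto_const_nhds
    exact (tendsto_rpow_atTop hα).comp tendsto_natCast_atTop_atTop
  have hev := hlim.eventually_lt_const (by linarith : (0:ℝ) < ε/2)
  obtain ⟨N, hN⟩ := Filter.eventually_atTop.mp (hev.and (eventually_ge_atTop 1))
  refine ⟨N, fun n hn => ?_⟩
  obtain ⟨hsmall, hn1⟩ := hN n hn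
  have hn0 : (0:ℝ) < (n:ℝ) := by exact_mod_cast Nat.lt_of_lt_of_le Nat.zero_lt_one hn1
  have hnα : 0 < (n:ℝ)^α := Real.rpow_pos_of_pos hn0 α
  -- pointwise bound
  have hpt : ∀ x : ℤ, |(exS p q γ a b n x).trace.re * (f (((x:ℝ)+n)/(n:ℝ)^α) - f 0)|
      ≤ (exS p q γ a b n x).trace.re * (ε/2)
        + ((2*‖f‖/η)/(n:ℝ)^α) * (((x:ℝ)+n) * (exS p q γ a b n x).trace.re) := by
    intro x
    rcases eq_or_lt_of_le (hpos n x) with h0 | hpx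
    · rw [← h0]; simp
    · have hxn : -(n:ℤ) ≤ x := by
        by_contra hcon
        rw [hzero n x (by omega)] at hpx
        exact lt_irrefl _ hpx
      have hx0 : (0:ℝ) ≤ (x:ℝ) + n := by
        have h3 : ((-(n:ℤ) : ℤ):ℝ) ≤ (x:ℝ) := by exact_mod_cast hxn
        push_cast at h3; linarith
      have ht0 : 0 ≤ ((x:ℝ)+n)/(n:ℝ)^α := div_nonneg hx0 hnα.le
      have hfb : |f (((x:ℝ)+n)/(n:ℝ)^α) - f 0| ≤ ε/2 + (2*‖f‖/η) * (((x:ℝ)+n)/(n:ℝ)^α) := by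
        by_cases hcase : |((x:ℝ)+n)/(n:ℝ)^α| < η
        · have h4 := hfc (show dist (((x:ℝ)+n)/(n:ℝ)^α) 0 < η by
            rw [Real.dist_eq, sub_zero]; exact hcase)
          rw [Real.dist_eq] at h4
          nlinarith [mul_nonneg hK0 ht0, mul_le_mul_of_nonneg_left ht0 hK0]
        · push_neg at hcase
          have hηt : η ≤ ((x:ℝ)+n)/(n:ℝ)^α := by rwa [abs_of_nonneg ht0] at hcase
          have h5 : |f (((x:ℝ)+n)/(n:ℝ)^α) - f 0| ≤ 2*‖f‖ := by
            have h5' := f.dist_le_two_norm (((x:ℝ)+n)/(n:ℝ)^α) 0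
            rw [Real.dist_eq] at h5'
            exact h5'
          have h6 : (2*‖f‖/η) * η = 2*‖f‖ := by field_simp
          have h7 : (2*‖f‖/η) * η ≤ (2*‖f‖/η) * (((x:ℝ)+n)/(n:ℝ)^α) :=
            mul_le_mul_of_nonneg_left hηt hK0
          linarith
      calc |(exS p q γ a b n x).trace.re * (f (((x:ℝ)+n)/(n:ℝ)^α) - f 0)|
          = (exS p q γ a b n x).trace.re * |f (((x:ℝ)+n)/(n:ℝ)^α) - f 0| := by
            rw [abs_mul, abs_of_nonneg (hpos n x)]
        _ ≤ (exS p q γ a b n x).trace.re * (ε/2 + (2*‖f‖/η) * (((x:ℝ)+n)/(n:ℝ)^α)) :=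
            mul_le_mul_of_nonneg_left hfb (hpos n x)
        _ = (exS p q γ a b n x).trace.re * (ε/2)
            + ((2*‖f‖/η)/(n:ℝ)^α) * (((x:ℝ)+n) * (exS p q γ a b n x).trace.re) := by
            ring
  -- summability facts
  have s1 : Summable (fun x : ℤ => (exS p q γ a b n x).trace.re * f (((x:ℝ)+n)/(n:ℝ)^α)) :=
    hsum_f n _
  have s2 : Summable (fun x : ℤ =>
      (exS p q γ a b n x).trace.re * (f (((x:ℝ)+n)/(n:ℝ)^α) - f 0)) := hsum_f n _
  have s2' : Summable (fun x : ℤ =>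
      |(exS p q γ a b n x).trace.re * (f (((x:ℝ)+n)/(n:ℝ)^α) - f 0)|) := s2.abs
  have s3 : Summable (fun x : ℤ => (exS p q γ a b n x).trace.re * (ε/2)) := hsum_f n _
  have s5 : Summable (fun x : ℤ => ((x:ℝ)+n) * (exS p q γ a b n x).trace.re) :=
    summable_of_bounds _ (-(n:ℤ)) n (fun x hx => by rw [hzero n x (by omega)]; ring)
  have s4 : Summable (fun x : ℤ =>
      ((2*‖f‖/η)/(n:ℝ)^α) * (((x:ℝ)+n) * (exS p q γ a b n x).trace.re)) :=
    s5.mul_left _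
  -- rewrite the difference
  have hsplit : (∑' x : ℤ, (exS p q γ a b n x).trace.re * f (((x:ℝ)+n)/(n:ℝ)^α)) - f 0
      = ∑' x : ℤ, (exS p q γ a b n x).trace.re * (f (((x:ℝ)+n)/(n:ℝ)^α) - f 0) := by
    have h8 : ∑' x : ℤ, (exS p q γ a b n x).trace.re * (f (((x:ℝ)+n)/(n:ℝ)^α) - f 0)
        = (∑' x : ℤ, (exS p q γ a b n x).trace.re * f (((x:ℝ)+n)/(n:ℝ)^α))
          - ∑' x : ℤ, (exS p q γ a b n x).trace.re * f 0 := by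
      rw [← Summable.tsum_sub s1 (hsum_f n (fun _ => f 0))]
      apply tsum_congr
      intro x
      ring
    rw [h8, tsum_mul_right, hPsum1 n]
    ring
  rw [Real.dist_eq, hsplit]
  calc |∑' x : ℤ, (exS p q γ a b n x).trace.re * (f (((x:ℝ)+n)/(n:ℝ)^α) - f 0)|
      ≤ ∑' x : ℤ, |(exS p q γ a b n x).trace.re * (f (((x:ℝ)+n)/(n:ℝ)^α) - f 0)| := by
        have h9 := norm_tsum_le_tsum_norm (f := fun x : ℤ =>
          (exS p q γ a b n x).trace.re * (f (((x:ℝ)+n)/(n:ℝ)^α) - f 0))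
          (by simp only [Real.norm_eq_abs]; exact s2')
        simp only [Real.norm_eq_abs] at h9
        exact h9
    _ ≤ ∑' x : ℤ, ((exS p q γ a b n x).trace.re * (ε/2)
          + ((2*‖f‖/η)/(n:ℝ)^α) * (((x:ℝ)+n) * (exS p q γ a b n x).trace.re)) :=
        Summable.tsum_le_tsum hpt s2' (s3.add s4)
    _ = (∑' x : ℤ, (exS p q γ a b n x).trace.re * (ε/2))
          + ((2*‖f‖/η)/(n:ℝ)^α) * ∑' x : ℤ, ((x:ℝ)+n) * (exS p q γ a b n x).trace.re := by
        rw [Summable.tsum_add s3 s4, tsum_mul_left]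
    _ ≤ ε/2 + ((2*‖f‖/η)/(n:ℝ)^α) * (2*b/γ^2) := by
        have h10 : (∑' x : ℤ, (exS p q γ a b n x).trace.re * (ε/2)) = ε/2 := by
          rw [tsum_mul_right, hPsum1 n]; ring
        have h11 := hMom n
        have hK' : 0 ≤ (2*‖f‖/η)/(n:ℝ)^α := div_nonneg hK0 hnα.le
        nlinarith
    _ < ε := by
        have h12 : ((2*‖f‖/η)/(n:ℝ)^α) * (2*b/γ^2)
            = (2*‖f‖/η) * (2*b/γ^2) / (n:ℝ)^α := by ring
        rw [h12]
        linarith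
end
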